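/- arXiv:2602.03289 — 6 statements merged into one kernel-verified Lean document; each statement's English description precedes it below -/
import Mathlib

section
/- Let d ∈ F[x] be irreducible with deg_{x₁}(d) > 0, j ≥ 1, and let f = Σ_θ a_θ/θ(d)^j be a finite sum over elements θ ∈ G, with a_θ ∈ F(x̂₁)[x₁] and deg_{x₁}(a_θ) < deg_{x₁}(d). Let c = (c₁,…,cₙ) with each c_i ∈ F nonzero. Then there exist g₁,…,gₙ ∈ F(x) such that f = Σ_{i=1}^n (c_i·θ_{x_i}(g_i) − g_i) + a/d^j, where a = Σ_θ c^{−α_θ}·θ^{−1}(a_θ) and α_θ ∈ ℤⁿ is the exponent vector with θ = θ_x^{α_θ}; moreover deg_{x₁}(a) < deg_{x₁}(d), and consequently f is (c₁θ_{x₁},…,cₙθ_{xₙ})-summable if and only if a/d^j is (c₁θ_{x₁},…,cₙθ_{xₙ})-summable. -/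
noncomputable section

/-- The field of rational functions `F(x₁,…,xₙ)`, modeled as the fraction field of the
multivariate polynomial ring. -/
abbrev MvRat (F : Type*) [Field F] (n : ℕ) := FractionRing (MvPolynomial (Fin n) F)

/-- The image of the variable `xᵢ` in `F(x₁,…,xₙ)`. -/
def xv {F : Type*} [Field F] {n : ℕ} (i : Fin n) : MvRat F n :=
  algebraMap (MvPolynomial (Fin n) F) (MvRat F n) (MvPolynomial.X i)

/-- The subfield `F(x₂,…,xₙ)` of `F(x₁,…,xₙ)` (the variable `x₁` has index `0`). -/
def hatField (F : Type*) [Field F] (n : ℕ) [NeZero n] : Subfield (MvRat F n) :=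
  Subfield.closure (Set.range (algebraMap F (MvRat F n)) ∪ (xv '' {i : Fin n | i ≠ 0}))

/-- `a` is a polynomial in `x1` over the subfield `E` of degree `< D`. -/
def IsPolyDeg {L : Type*} [Field L] (E : Subfield L) (x1 : L) (D : ℕ) (a : L) : Prop :=
  ∃ cf : Fin D → E, a = ∑ k : Fin D, (cf k : L) * x1 ^ (k : ℕ)

/-- `a` is a polynomial in `x1` over the subfield `E`, i.e. `a ∈ E[x1]`. -/
def IsPolyE {L : Type*} [Field L] (E : Subfield L) (x1 a : L) : Prop :=
  ∃ D : ℕ, IsPolyDeg E x1 D a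

/-- `a` is a Laurent polynomial in `x1` over the subfield `E`, i.e. `a ∈ E[x1, x1⁻¹]`. -/
def IsLaurent {L : Type*} [Field L] (E : Subfield L) (x1 a : L) : Prop :=
  ∃ (s : Finset ℤ) (cf : ℤ → L), (∀ k ∈ s, cf k ∈ E) ∧ a = ∑ k ∈ s, cf k * x1 ^ k

/-- For a family `θ` of `F`-automorphisms and an exponent vector `α`,
the product `∏ i, θᵢ^(αᵢ)` (the element `θ_x^α` of the group generated by the `θᵢ`). -/
def thetaPowS {F L : Type*} [CommSemiring F] [Semiring L] [Algebra F L] {ι : Type*} [Fintype ι]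
    (θ : ι → (L ≃ₐ[F] L)) (α : ι → ℤ) : L ≃ₐ[F] L :=
  (Finset.univ.toList.map fun i => θ i ^ α i).prod

/-- Membership in the space `V_{[d]_G,j}`: `f` is a finite sum of fractions `a_g / g(d)^j`
with `g` in the group `G` and `a_g ∈ E[x₁]` of degree `< D` (`= deg_{x₁} d`). -/
def MemV {F L : Type*} [Field F] [Field L] [Algebra F L] (G : Set (L ≃ₐ[F] L))
    (E : Subfield L) (x1 : L) (dd : L) (D j : ℕ) (f : L) : Prop :=
  ∃ s : Finset (L ≃ₐ[F] L), ↑s ⊆ G ∧ ∃ a : (L ≃ₐ[F] L) → L,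
    (∀ g ∈ s, IsPolyDeg E x1 D (a g)) ∧ f = ∑ g ∈ s, a g / (g dd) ^ j

/-- `p` and `p'` are `G`-equivalent: `p = c · g(p')` for some nonzero `c ∈ F` and `g ∈ G`. -/
def GEquivSet {F L : Type*} [Field F] [Field L] [Algebra F L] (G : Set (L ≃ₐ[F] L))
    (p p' : L) : Prop :=
  ∃ c : F, c ≠ 0 ∧ ∃ g ∈ G, p = algebraMap F L c * g p'

/-- `w` divides `p` inside the ring `E[x1]`. -/
def DvdE {L : Type*} [Field L] (E : Subfield L) (x1 w p : L) : Prop :=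
  ∃ u : L, IsPolyE E x1 u ∧ p = w * u

/-- `p ∈ E[x₁]` is normal w.r.t. `θ1`: `gcd(p, θ1^ℓ(p)) = 1` for all nonzero `ℓ ∈ ℤ`,
i.e. every common divisor (in `E[x₁]`) of `p` and `θ1^ℓ(p)` is a unit (lies in `E`). -/
def NormalWrt {F L : Type*} [Field F] [Field L] [Algebra F L] (E : Subfield L) (x1 : L)
    (θ1 : L ≃ₐ[F] L) (p : L) : Prop :=
  ∀ ℓ : ℤ, ℓ ≠ 0 → ∀ w : L, IsPolyE E x1 w →
    DvdE E x1 w p → DvdE E x1 w ((θ1 ^ ℓ) p) → w ∈ E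

/-- The isotropy group of `p` (in exponent-vector coordinates): the subgroup of `ℤ^ι`
of all `α` with `Θ(α)(p) = c·p` for some nonzero `c ∈ F`. -/
def isotropyZ {F L : Type*} [Field F] [Field L] [Algebra F L] {ι : Type*}
    (Θ : (ι → ℤ) → (L ≃ₐ[F] L))
    (hadd : ∀ α β, Θ (α + β) = Θ α * Θ β) (h0 : Θ 0 = 1) (p : L) :
    AddSubgroup (ι → ℤ) where
  carrier := {α | ∃ c : F, c ≠ 0 ∧ Θ α p = algebraMap F L c * p}
  zero_mem' := ⟨1, one_ne_zero, by simp [h0]⟩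
  add_mem' := by
    rintro α β ⟨c, hc, hcp⟩ ⟨e, he, hep⟩
    refine ⟨e * c, mul_ne_zero he hc, ?_⟩
    rw [hadd, AlgEquiv.mul_apply, hep, map_mul, AlgEquiv.commutes, hcp, map_mul]
    ring
  neg_mem' := by
    rintro α ⟨c, hc, hcp⟩
    refine ⟨c⁻¹, inv_ne_zero hc, ?_⟩
    have h1 : Θ (-α) (Θ α p) = p := by
      rw [← AlgEquiv.mul_apply, ← hadd, neg_add_cancel, h0, AlgEquiv.one_apply]
    rw [hcp, map_mul, AlgEquiv.commutes] at h1
    have hc0 : (algebraMap F L) c ≠ 0 :=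
      (map_ne_zero_iff _ (algebraMap F L).injective).mpr hc
    rw [map_inv₀, eq_inv_mul_iff_mul_eq₀ hc0]
    exact h1

end


noncomputable section StmtTwoAux

variable {F L : Type*} [Field F] [Field L] [Algebra F L] {n : ℕ}

/-- Summability with respect to the system `(cᵢ θᵢ)`. -/
def Summ (c : Fin n → F) (θ : Fin n → (L ≃ₐ[F] L)) (f : L) : Prop :=
  ∃ g : Fin n → L, f = ∑ i : Fin n, (algebraMap F L (c i) * θ i (g i) - g i)

variable {c : Fin n → F} {θ : Fin n → (L ≃ₐ[F] L)}

lemma summ_zero : Summ c θ (0 : L) := ⟨0, by simp⟩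

lemma summ_add {f1 f2 : L} (h1 : Summ c θ f1) (h2 : Summ c θ f2) : Summ c θ (f1 + f2) := by
  obtain ⟨g1, rfl⟩ := h1
  obtain ⟨g2, rfl⟩ := h2
  refine ⟨g1 + g2, ?_⟩
  rw [← Finset.sum_add_distrib]
  refine Finset.sum_congr rfl fun i _ => ?_
  simp only [Pi.add_apply, map_add]
  ring

lemma summ_neg {f1 : L} (h1 : Summ c θ f1) : Summ c θ (-f1) := by
  obtain ⟨g1, rfl⟩ := h1
  refine ⟨-g1, ?_⟩
  rw [← Finset.sum_neg_distrib]
  refine Finset.sum_congr rfl fun i _ => ?_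
  simp only [Pi.neg_apply, map_neg]
  ring

lemma summ_sub {f1 f2 : L} (h1 : Summ c θ f1) (h2 : Summ c θ f2) : Summ c θ (f1 - f2) := by
  have := summ_add h1 (summ_neg h2)
  rwa [← sub_eq_add_neg] at this

lemma summ_sum {ι : Type*} (s : Finset ι) (f : ι → L) (h : ∀ i ∈ s, Summ c θ (f i)) :
    Summ c θ (∑ i ∈ s, f i) := by
  classical
  induction s using Finset.induction_on with
  | empty => simpa using (summ_zero : Summ c θ (0:L))
  | insert _ _ hx ih =>
      rw [Finset.sum_insert hx]
      exact summ_add (h _ (Finset.mem_insert_self _ _))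
        (ih fun i hi => h i (Finset.mem_insert_of_mem hi))

lemma summ_step (i : Fin n) (g : L) : Summ c θ (algebraMap F L (c i) * θ i g - g) := by
  classical
  refine ⟨fun l => if l = i then g else 0, Eq.symm ?_⟩
  rw [Finset.sum_eq_single_of_mem i (Finset.mem_univ i) (fun l _ hl => by simp [hl])]
  simp

lemma summ_pow (i : Fin n) (k : ℕ) (h : L) :
    Summ c θ (algebraMap F L (c i ^ k) * ((θ i ^ k) h) - h) := by
  induction k with
  | zero => simpa using (summ_zero : Summ c θ (0:L))
  | succ k ih =>
      set u := algebraMap F L (c i ^ k) * ((θ i ^ k) h) with hu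
      have e1 : algebraMap F L (c i ^ (k+1)) * ((θ i ^ (k+1)) h)
          = algebraMap F L (c i) * θ i u := by
        rw [hu, map_mul, AlgEquiv.commutes, pow_succ, map_mul,
          show ((θ i ^ (k+1)) h) = θ i ((θ i ^ k) h) from by rw [pow_succ']; rfl]
        ring
      have e2 : algebraMap F L (c i ^ (k+1)) * ((θ i ^ (k+1)) h) - h
          = (algebraMap F L (c i) * θ i u - u) + (u - h) := by rw [e1]; ring
      rw [e2]
      exact summ_add (summ_step i u) ih

lemma summ_zpow (hc : ∀ i, c i ≠ 0) (i : Fin n) (m : ℤ) (h : L) :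
    Summ c θ (algebraMap F L (c i ^ m) * ((θ i ^ m) h) - h) := by
  obtain ⟨k, rfl | rfl⟩ := m.eq_nat_or_neg
  · rw [zpow_natCast, zpow_natCast]
    exact summ_pow i k h
  · set u := algebraMap F L (c i ^ (-(k:ℤ))) * ((θ i ^ (-(k:ℤ))) h) with hu
    have h1 : (θ i ^ k) ((θ i ^ (-(k:ℤ))) h) = h := by
      rw [show (θ i ^ k) ((θ i ^ (-(k:ℤ))) h) = ((θ i ^ (k:ℤ)) * (θ i ^ (-(k:ℤ)))) h from
        by rw [zpow_natCast]; rfl, ← zpow_add, add_neg_cancel, zpow_zero]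
      rfl
    have h2 : c i ^ k * c i ^ (-(k:ℤ)) = 1 := by
      rw [← zpow_natCast (c i) k, ← zpow_add₀ (hc i), add_neg_cancel, zpow_zero]
    have key : algebraMap F L (c i ^ k) * ((θ i ^ k) u) = h := by
      rw [hu]
      rw [map_mul]
      rw [AlgEquiv.commutes]
      rw [h1]
      rw [← mul_assoc]
      rw [← map_mul (algebraMap F L)]
      rw [h2]
      rw [map_one, one_mul]
    have := summ_neg (summ_pow (c := c) (θ := θ) i k u)
    rw [key, neg_sub] at this
    exact this

lemma summ_listProd (hc : ∀ i, c i ≠ 0) (α : Fin n → ℤ) (ℓ : List (Fin n)) (h : L) :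
    Summ c θ (algebraMap F L ((ℓ.map fun i => c i ^ α i).prod)
      * (((ℓ.map fun i => θ i ^ α i).prod) h) - h) := by
  induction ℓ with
  | nil => simpa using (summ_zero : Summ c θ (0:L))
  | cons x xs ih =>
      rw [List.map_cons, List.map_cons, List.prod_cons, List.prod_cons]
      set C' := (xs.map fun i => c i ^ α i).prod with hC'
      set P := (xs.map fun i => θ i ^ α i).prod with hP
      set u := algebraMap F L C' * P h with hu
      have h1 : (θ x ^ α x) u = algebraMap F L C' * ((θ x ^ α x) (P h)) := by
        rw [hu, map_mul, AlgEquiv.commutes]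
      have e1 : algebraMap F L (c x ^ α x * C') * ((θ x ^ α x * P) h)
          = algebraMap F L (c x ^ α x) * ((θ x ^ α x) u) := by
        rw [AlgEquiv.mul_apply, h1, map_mul]; ring
      have e2 : algebraMap F L (c x ^ α x * C') * ((θ x ^ α x * P) h) - h
          = (algebraMap F L (c x ^ α x) * ((θ x ^ α x) u) - u) + (u - h) := by
        rw [e1]; ring
      rw [e2]
      exact summ_add (summ_zpow hc x (α x) u) ih

lemma summ_thetaPowS (hc : ∀ i, c i ≠ 0) (α : Fin n → ℤ) (h : L) :
    Summ c θ (algebraMap F L (∏ i : Fin n, c i ^ α i) * (thetaPowS θ α h) - h) := by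
  have := summ_listProd (θ := θ) hc α Finset.univ.toList h
  rwa [Finset.prod_map_toList] at this

/-! ### Good automorphisms -/

def GoodAut (E : Subfield L) (x1 : L) (φ : L ≃ₐ[F] L) : Prop :=
  (∀ e ∈ E, φ e ∈ E) ∧ (∀ e ∈ E, φ.symm e ∈ E) ∧
  ∃ b e0 : L, b ∈ E ∧ e0 ∈ E ∧ b ≠ 0 ∧ φ x1 = b * x1 + e0

variable {E : Subfield L} {x1 : L}

lemma good_one : GoodAut (F := F) E x1 (1 : L ≃ₐ[F] L) :=
  ⟨fun e he => he, fun e he => he, 1, 0, one_mem _, zero_mem _, one_ne_zero, by simp⟩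

lemma good_mul {φ ψ : L ≃ₐ[F] L} (hφ : GoodAut E x1 φ) (hψ : GoodAut E x1 ψ) :
    GoodAut E x1 (φ * ψ) := by
  obtain ⟨hφE, hφs, b, e0, hb, he0, hb0, hbx⟩ := hφ
  obtain ⟨hψE, hψs, b', e0', hb', he0', hb0', hbx'⟩ := hψ
  refine ⟨fun e he => hφE _ (hψE e he), fun e he => hψs _ (hφs e he),
    φ b' * b, φ b' * e0 + φ e0', mul_mem (hφE _ hb') hb,
    add_mem (mul_mem (hφE _ hb') he0) (hφE _ he0'),
    mul_ne_zero ((map_ne_zero_iff φ φ.injective).mpr hb0') hb0, ?_⟩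
  rw [AlgEquiv.mul_apply, hbx', map_add, map_mul, hbx]
  ring

lemma good_symm {φ : L ≃ₐ[F] L} (hφ : GoodAut E x1 φ) : GoodAut E x1 φ.symm := by
  obtain ⟨hφE, hφs, b, e0, hb, he0, hb0, hbx⟩ := hφ
  refine ⟨hφs, by simpa using hφE, φ.symm b⁻¹, -(φ.symm (b⁻¹ * e0)),
    hφs _ (inv_mem hb), neg_mem (hφs _ (mul_mem (inv_mem hb) he0)),
    (map_ne_zero_iff _ φ.symm.injective).mpr (inv_ne_zero hb0), ?_⟩
  apply φ.injective
  rw [AlgEquiv.apply_symm_apply, map_add, map_mul, map_neg,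
    AlgEquiv.apply_symm_apply, AlgEquiv.apply_symm_apply, hbx]
  field_simp
  ring

lemma good_inv {φ : L ≃ₐ[F] L} (hφ : GoodAut E x1 φ) : GoodAut E x1 φ⁻¹ := good_symm hφ

lemma good_pow {φ : L ≃ₐ[F] L} (hφ : GoodAut E x1 φ) (k : ℕ) : GoodAut E x1 (φ ^ k) := by
  induction k with
  | zero => simpa using (good_one : GoodAut (F := F) E x1 1)
  | succ k ih => rw [pow_succ]; exact good_mul ih hφ

lemma good_zpow {φ : L ≃ₐ[F] L} (hφ : GoodAut E x1 φ) (m : ℤ) : GoodAut E x1 (φ ^ m) := by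
  obtain ⟨k, rfl | rfl⟩ := m.eq_nat_or_neg
  · rw [zpow_natCast]; exact good_pow hφ k
  · rw [zpow_neg, zpow_natCast]; exact good_inv (good_pow hφ k)

lemma good_listProd (ℓ : List (L ≃ₐ[F] L)) (h : ∀ φ ∈ ℓ, GoodAut E x1 φ) :
    GoodAut E x1 ℓ.prod := by
  induction ℓ with
  | nil => simpa using (good_one : GoodAut (F := F) E x1 1)
  | cons x xs ih =>
      rw [List.prod_cons]
      exact good_mul (h x List.mem_cons_self) (ih fun φ hφ => h φ (List.mem_cons_of_mem _ hφ))

/-! ### Polynomials of bounded degree -/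

def IsPolyDeg' (E : Subfield L) (x1 : L) (D : ℕ) (a : L) : Prop :=
  ∃ cf : ℕ → L, (∀ k, cf k ∈ E) ∧ a = ∑ k ∈ Finset.range D, cf k * x1 ^ k

lemma isPolyDeg_iff' {D : ℕ} {a : L} : IsPolyDeg E x1 D a ↔ IsPolyDeg' E x1 D a := by
  constructor
  · rintro ⟨cf, rfl⟩
    refine ⟨fun k => if h : k < D then (cf ⟨k, h⟩ : L) else 0, fun k => ?_, ?_⟩
    · dsimp only; split
      · exact (cf _).2
      · exact zero_mem _
    · rw [← Fin.sum_univ_eq_sum_range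
        (fun k => (if h : k < D then (cf ⟨k, h⟩ : L) else 0) * x1 ^ k) D]
      refine Finset.sum_congr rfl fun k _ => ?_
      rw [dif_pos k.isLt]
  · rintro ⟨cf, hmem, rfl⟩
    exact ⟨fun k => ⟨cf k, hmem k⟩,
      by rw [← Fin.sum_univ_eq_sum_range (fun k => cf k * x1 ^ k) D]⟩

lemma polyDeg'_mono {D1 D2 : ℕ} (h12 : D1 ≤ D2) {a : L}
    (h : IsPolyDeg' E x1 D1 a) : IsPolyDeg' E x1 D2 a := by
  obtain ⟨cf, hmem, rfl⟩ := h
  refine ⟨fun k => if k < D1 then cf k else 0, fun k => ?_, ?_⟩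
  · dsimp only; split
    · exact hmem k
    · exact zero_mem _
  · rw [← Finset.sum_subset (Finset.range_subset_range.mpr h12)
      (fun x _ hx => by simp only [Finset.mem_range] at hx; simp [hx])]
    exact Finset.sum_congr rfl fun k hk => by simp [Finset.mem_range.mp hk]

lemma polyDeg_zero {D : ℕ} : IsPolyDeg E x1 D (0 : L) := ⟨0, by simp⟩

lemma polyDeg_add {D : ℕ} {a b : L} (ha : IsPolyDeg E x1 D a) (hb : IsPolyDeg E x1 D b) :
    IsPolyDeg E x1 D (a + b) := by
  obtain ⟨cf1, rfl⟩ := ha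
  obtain ⟨cf2, rfl⟩ := hb
  refine ⟨cf1 + cf2, ?_⟩
  rw [← Finset.sum_add_distrib]
  refine Finset.sum_congr rfl fun k _ => ?_
  simp only [Pi.add_apply]
  push_cast
  ring

lemma polyDeg_smul {D : ℕ} {e a : L} (he : e ∈ E) (ha : IsPolyDeg E x1 D a) :
    IsPolyDeg E x1 D (e * a) := by
  obtain ⟨cf, rfl⟩ := ha
  refine ⟨fun k => ⟨e, he⟩ * cf k, ?_⟩
  rw [Finset.mul_sum]
  refine Finset.sum_congr rfl fun k _ => ?_
  push_cast
  ring

lemma polyDeg_sum {D : ℕ} {ι : Type*} (s : Finset ι) (f : ι → L)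
    (h : ∀ i ∈ s, IsPolyDeg E x1 D (f i)) : IsPolyDeg E x1 D (∑ i ∈ s, f i) := by
  classical
  induction s using Finset.induction_on with
  | empty => simpa using (polyDeg_zero : IsPolyDeg E x1 D (0:L))
  | insert _ _ hx ih =>
      rw [Finset.sum_insert hx]
      exact polyDeg_add (h _ (Finset.mem_insert_self _ _))
        (ih fun i hi => h i (Finset.mem_insert_of_mem hi))

lemma polyDeg_affine_pow {D k : ℕ} {b e0 : L} (hb : b ∈ E) (he0 : e0 ∈ E) (hk : k < D) :
    IsPolyDeg E x1 D ((b * x1 + e0) ^ k) := by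
  rw [isPolyDeg_iff']
  refine polyDeg'_mono hk ⟨fun m => b ^ m * e0 ^ (k - m) * (k.choose m : L),
    fun m => mul_mem (mul_mem (pow_mem hb m) (pow_mem he0 _)) (natCast_mem E _), ?_⟩
  rw [add_pow]
  refine Finset.sum_congr rfl fun m _ => ?_
  rw [mul_pow]
  ring

lemma polyDeg_map {D : ℕ} {a : L} {φ : L ≃ₐ[F] L} (hφ : GoodAut E x1 φ)
    (ha : IsPolyDeg E x1 D a) : IsPolyDeg E x1 D (φ a) := by
  obtain ⟨cf, rfl⟩ := ha
  obtain ⟨hφE, hφs, b, e0, hb, he0, hb0, hbx⟩ := hφ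
  rw [map_sum]
  refine polyDeg_sum Finset.univ _ fun k _ => ?_
  rw [map_mul, map_pow, hbx]
  exact polyDeg_smul (hφE _ (cf k).2) (polyDeg_affine_pow hb he0 k.isLt)

end StmtTwoAux


set_option maxHeartbeats 1000000 in
/-- **Lemma: reduction of an orbit component to a simple fraction.** Let
`d ∈ F[x]` be irreducible with `deg_{x₁} d > 0`, `j ≥ 1`, and
`f = Σ_{α ∈ s} a_α / θ_x^α(d)^j` with `a_α ∈ F(x̂₁)[x₁]` of degree `< deg_{x₁} d`.
Let `c₁,…,cₙ ∈ F` be nonzero. Then there exist `g₁,…,gₙ ∈ F(x)` with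
`f = Σᵢ (cᵢθ_{xᵢ}(gᵢ) − gᵢ) + a/d^j` where `a = Σ_α c^{−α}·(θ_x^α)⁻¹(a_α)`; moreover
`deg_{x₁} a < deg_{x₁} d`, and `f` is `(c₁θ_{x₁},…,cₙθ_{xₙ})`-summable iff `a/d^j` is. -/
theorem stmt_2 {F : Type*} [Field F] [CharZero F] {n : ℕ} [NeZero n]
    (q : F) (hq0 : q ≠ 0) (hq : ∀ m : ℤ, m ≠ 0 → q ^ m ≠ 1)
    (θ : Fin n → (MvRat F n ≃ₐ[F] MvRat F n))
    (hθfix : ∀ i l : Fin n, i ≠ l → θ i (xv l) = xv l)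
    (hθ : ∀ i : Fin n,
      θ i (xv i) = xv i + 1 ∨ θ i (xv i) = algebraMap F (MvRat F n) q * xv i)
    (d : MvPolynomial (Fin n) F) (hd : Irreducible d) (hdeg : 0 < d.degreeOf 0)
    (j : ℕ) (hj : 1 ≤ j)
    (s : Finset (Fin n → ℤ)) (aθ : (Fin n → ℤ) → MvRat F n)
    (haθ : ∀ α ∈ s, IsPolyDeg (hatField F n) (xv 0) (d.degreeOf 0) (aθ α))
    (f : MvRat F n)
    (hf : f = ∑ α ∈ s, aθ α /
      (thetaPowS θ α (algebraMap (MvPolynomial (Fin n) F) (MvRat F n) d)) ^ j)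
    (c : Fin n → F) (hc : ∀ i, c i ≠ 0) :
    (∃ g : Fin n → MvRat F n,
        f = (∑ i : Fin n, (algebraMap F (MvRat F n) (c i) * θ i (g i) - g i)) +
          (∑ α ∈ s, algebraMap F (MvRat F n) (∏ l : Fin n, c l ^ (-(α l))) *
              (thetaPowS θ α).symm (aθ α)) /
            (algebraMap (MvPolynomial (Fin n) F) (MvRat F n) d) ^ j) ∧
    IsPolyDeg (hatField F n) (xv 0) (d.degreeOf 0)
      (∑ α ∈ s, algebraMap F (MvRat F n) (∏ l : Fin n, c l ^ (-(α l))) *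
        (thetaPowS θ α).symm (aθ α)) ∧
    ((∃ g : Fin n → MvRat F n,
        f = ∑ i : Fin n, (algebraMap F (MvRat F n) (c i) * θ i (g i) - g i)) ↔
      (∃ g : Fin n → MvRat F n,
        (∑ α ∈ s, algebraMap F (MvRat F n) (∏ l : Fin n, c l ^ (-(α l))) *
            (thetaPowS θ α).symm (aθ α)) /
          (algebraMap (MvPolynomial (Fin n) F) (MvRat F n) d) ^ j =
          ∑ i : Fin n, (algebraMap F (MvRat F n) (c i) * θ i (g i) - g i))) := by
  classical
  have hE_alg : ∀ e : F, algebraMap F (MvRat F n) e ∈ hatField F n :=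
    fun e => Subfield.subset_closure (Set.mem_union_left _ ⟨e, rfl⟩)
  have hE_xv : ∀ l : Fin n, l ≠ 0 → xv l ∈ hatField F n :=
    fun l hl => Subfield.subset_closure (Set.mem_union_right _ ⟨l, hl, rfl⟩)
  have hmapE : ∀ i : Fin n, ∀ e ∈ hatField F n, θ i e ∈ hatField F n := by
    intro i e he
    induction he using Subfield.closure_induction with
    | mem y hy =>
        rcases hy with ⟨e, rfl⟩ | ⟨l, hl, rfl⟩
        · rw [AlgEquiv.commutes]; exact hE_alg e
        · by_cases hil : i = l
          · subst hil
            rcases hθ i with h | h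
            · rw [h]; exact add_mem (hE_xv i hl) (one_mem _)
            · rw [h]; exact mul_mem (hE_alg q) (hE_xv i hl)
          · rw [hθfix i l hil]; exact hE_xv l hl
    | one => rw [map_one]; exact one_mem _
    | add a b _ _ iha ihb => rw [map_add]; exact add_mem iha ihb
    | neg a _ iha => rw [map_neg]; exact neg_mem iha
    | inv a _ iha => rw [map_inv₀]; exact inv_mem iha
    | mul a b _ _ iha ihb => rw [map_mul]; exact mul_mem iha ihb
  have hsymE : ∀ i : Fin n, ∀ e ∈ hatField F n, (θ i).symm e ∈ hatField F n := by
    intro i e he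
    induction he using Subfield.closure_induction with
    | mem y hy =>
        rcases hy with ⟨e, rfl⟩ | ⟨l, hl, rfl⟩
        · rw [AlgEquiv.commutes]; exact hE_alg e
        · by_cases hil : i = l
          · subst hil
            rcases hθ i with h | h
            · have h2 : (θ i).symm (xv i) = xv i - 1 := by
                apply (θ i).injective
                rw [AlgEquiv.apply_symm_apply, map_sub, h, map_one]
                ring
              rw [h2]; exact sub_mem (hE_xv i hl) (one_mem _)
            · have h2 : (θ i).symm (xv i) = algebraMap F (MvRat F n) q⁻¹ * xv i := by
                apply (θ i).injective
                rw [AlgEquiv.apply_symm_apply, map_mul, AlgEquiv.commutes, h, ← mul_assoc,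
                  ← map_mul, inv_mul_cancel₀ hq0, map_one, one_mul]
              rw [h2]; exact mul_mem (hE_alg q⁻¹) (hE_xv i hl)
          · have h2 : (θ i).symm (xv l) = xv l := by
              apply (θ i).injective
              rw [AlgEquiv.apply_symm_apply, hθfix i l hil]
            rw [h2]; exact hE_xv l hl
    | one => rw [map_one]; exact one_mem _
    | add a b _ _ iha ihb => rw [map_add]; exact add_mem iha ihb
    | neg a _ iha => rw [map_neg]; exact neg_mem iha
    | inv a _ iha => rw [map_inv₀]; exact inv_mem iha
    | mul a b _ _ iha ihb => rw [map_mul]; exact mul_mem iha ihb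
  have hgoodθ : ∀ i : Fin n, GoodAut (hatField F n) (xv 0) (θ i) := by
    intro i
    refine ⟨hmapE i, hsymE i, ?_⟩
    by_cases hi : i = 0
    · subst hi
      rcases hθ 0 with h | h
      · exact ⟨1, 1, one_mem _, one_mem _, one_ne_zero, by rw [h]; ring⟩
      · exact ⟨algebraMap F (MvRat F n) q, 0, hE_alg q, zero_mem _,
          (map_ne_zero_iff _ (algebraMap F (MvRat F n)).injective).mpr hq0, by rw [h]; ring⟩
    · exact ⟨1, 0, one_mem _, zero_mem _, one_ne_zero, by rw [hθfix i 0 hi]; ring⟩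
  have hgood : ∀ α : Fin n → ℤ, GoodAut (hatField F n) (xv 0) (thetaPowS θ α) := by
    intro α
    refine good_listProd _ fun φ hφ => ?_
    rw [List.mem_map] at hφ
    obtain ⟨i, _, rfl⟩ := hφ
    exact good_zpow (hgoodθ i) (α i)
  set dd := algebraMap (MvPolynomial (Fin n) F) (MvRat F n) d with hdd
  set aa := ∑ α ∈ s, algebraMap F (MvRat F n) (∏ l : Fin n, c l ^ (-(α l))) *
      (thetaPowS θ α).symm (aθ α) with haa
  have hd0 : d ≠ 0 := hd.ne_zero
  have hdd0 : dd ≠ 0 := by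
    rw [hdd]
    exact (map_ne_zero_iff _
      (IsFractionRing.injective (MvPolynomial (Fin n) F) (MvRat F n))).mpr hd0
  have hCC : ∀ α : Fin n → ℤ,
      algebraMap F (MvRat F n) (∏ l : Fin n, c l ^ (α l)) *
      algebraMap F (MvRat F n) (∏ l : Fin n, c l ^ (-(α l))) = 1 := by
    intro α
    rw [← map_mul, ← Finset.prod_mul_distrib,
      show ∏ l : Fin n, (c l ^ α l * c l ^ (-(α l))) = 1 from
        Finset.prod_eq_one fun l _ => by rw [← zpow_add₀ (hc l), add_neg_cancel, zpow_zero],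
      map_one]
  have claim1 : ∀ α : Fin n → ℤ,
      aθ α / (thetaPowS θ α dd) ^ j
        = algebraMap F (MvRat F n) (∏ l : Fin n, c l ^ (α l)) *
          thetaPowS θ α ((algebraMap F (MvRat F n) (∏ l : Fin n, c l ^ (-(α l))) *
            (thetaPowS θ α).symm (aθ α)) / dd ^ j) := by
    intro α
    rw [map_div₀, map_mul, AlgEquiv.commutes, AlgEquiv.apply_symm_apply, map_pow,
      ← mul_div_assoc, ← mul_assoc, hCC α, one_mul]
  have key : Summ c θ (f - aa / dd ^ j) := by
    have e0 : f - aa / dd ^ j = ∑ α ∈ s,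
        (aθ α / (thetaPowS θ α dd) ^ j -
          (algebraMap F (MvRat F n) (∏ l : Fin n, c l ^ (-(α l))) *
            (thetaPowS θ α).symm (aθ α)) / dd ^ j) := by
      rw [hf, haa, Finset.sum_div, ← Finset.sum_sub_distrib]
    rw [e0]
    refine summ_sum _ _ fun α hα => ?_
    rw [claim1 α]
    exact summ_thetaPowS hc α _
  obtain ⟨g0, hg0⟩ := key
  refine ⟨⟨g0, by rw [← hg0]; ring⟩, ?_, ?_⟩
  · rw [haa]
    refine polyDeg_sum _ _ fun α hα => ?_
    exact polyDeg_smul (hE_alg _) (polyDeg_map (good_symm (hgood α)) (haθ α hα))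
  · constructor
    · rintro ⟨g, hgf⟩
      have h2 := summ_sub (⟨g, hgf⟩ : Summ c θ f)
        (⟨g0, hg0⟩ : Summ c θ (f - aa / dd ^ j))
      rw [show f - (f - aa / dd ^ j) = aa / dd ^ j from by ring] at h2
      exact h2
    · rintro ⟨g, hga⟩
      have h2 := summ_add (⟨g0, hg0⟩ : Summ c θ (f - aa / dd ^ j))
        (⟨g, hga⟩ : Summ c θ (aa / dd ^ j))
      rw [show (f - aa / dd ^ j) + aa / dd ^ j = f from by ring] at h2
      exact h2
end

section
/- Suppose θ_{x₁} = τ_{q,x₁} and let ν ∈ ℤ. Let f ∈ F(x̂₁)[x₁,x₁^{−1}] be a Laurent polynomial written as f = q^{−ν}·τ_{q,x₁}(g) − g + f_ν for some g ∈ F(x̂₁)[x₁,x₁^{−1}] and f_ν ∈ W_ν, and let c₂,…,cₙ ∈ F be nonzero with θ̃_{x_i} = c_i·θ_{x_i}. Then f is (q^{−ν}τ_{q,x₁}, θ̃_{x₂},…,θ̃_{xₙ})-summable in F(x) if and only if f_ν is (θ̃_{x₂},…,θ̃_{xₙ})-summable in F(x). -/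
noncomputable section Stmt3Aux
namespace Stmt3Aux

set_option synthInstance.maxHeartbeats 1000000
set_option maxHeartbeats 1000000

open HahnSeries

section Twist
variable {K : Type*} [Field K]

theorem addAntidiagonal_congr {Γ : Type*} [AddCommMonoid Γ] [PartialOrder Γ] [IsOrderedCancelAddMonoid Γ]
    {s s' t t' : Set Γ} (hs : s.IsPWO) (ht : t.IsPWO) (hs' : s'.IsPWO) (ht' : t'.IsPWO)
    (h1 : s = s') (h2 : t = t') (a : Γ) :
    Finset.antidiagonal hs ht a = Finset.antidiagonal hs' ht' a := by
  subst h1; subst h2; rfl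

/-- The coefficient-wise twist of a Hahn series: coefficient `j` becomes `c^j * ρ(coeff j)`. -/
def twistFun (c : Kˣ) (ρ : K →+* K) (u : HahnSeries ℤ K) : HahnSeries ℤ K where
  coeff j := (c : K) ^ j * ρ (u.coeff j)
  isPWO_support' := u.isPWO_support.mono (fun j hj => by
    simp only [Function.mem_support] at hj ⊢
    intro h; apply hj; rw [h, map_zero, mul_zero])

theorem twistFun_coeff (c : Kˣ) (ρ : K →+* K) (u : HahnSeries ℤ K) (j : ℤ) :
    (twistFun c ρ u).coeff j = (c : K) ^ j * ρ (u.coeff j) := rfl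

theorem twistFun_support (c : Kˣ) {ρ : K →+* K} (hρ : Function.Injective ρ)
    (u : HahnSeries ℤ K) : (twistFun c ρ u).support = u.support := by
  ext j
  simp only [HahnSeries.mem_support, twistFun_coeff, mul_ne_zero_iff]
  constructor
  · rintro ⟨-, h⟩; intro h0; exact h (h0 ▸ map_zero ρ)
  · intro h; exact ⟨zpow_ne_zero _ c.ne_zero, fun h0 => h (hρ (h0.trans (map_zero ρ).symm))⟩

/-- The coefficient-wise twist as a ring homomorphism. -/
def twist (c : Kˣ) (ρ : K →+* K) (hρ : Function.Injective ρ) :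
    HahnSeries ℤ K →+* HahnSeries ℤ K where
  toFun := twistFun c ρ
  map_one' := by
    ext j
    by_cases h : j = 0 <;> simp [twistFun_coeff, coeff_one, h]
  map_mul' u v := by
    ext a
    show (c : K) ^ a * ρ ((u * v).coeff a) = (twistFun c ρ u * twistFun c ρ v).coeff a
    rw [coeff_mul, coeff_mul_left' u.isPWO_support
      (le_of_eq (twistFun_support c hρ u)),
      addAntidiagonal_congr u.isPWO_support (twistFun c ρ v).isPWO_support
        u.isPWO_support v.isPWO_support rfl (twistFun_support c hρ v) a,
      map_sum, Finset.mul_sum]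
    refine Finset.sum_congr rfl fun ij hij => ?_
    obtain ⟨-, -, hsum⟩ := Finset.mem_addAntidiagonal.mp hij
    rw [twistFun_coeff, twistFun_coeff, map_mul, ← hsum, zpow_add₀ c.ne_zero]
    ring
  map_zero' := by ext j; simp [twistFun_coeff]
  map_add' u v := by ext j; simp [twistFun_coeff, mul_add]

theorem twist_coeff (c : Kˣ) (ρ : K →+* K) (hρ : Function.Injective ρ)
    (u : HahnSeries ℤ K) (j : ℤ) :
    (twist c ρ hρ u).coeff j = (c : K) ^ j * ρ (u.coeff j) := rfl

theorem twist_single (c : Kˣ) (ρ : K →+* K) (hρ : Function.Injective ρ) (k : ℤ) (r : K) :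
    twist c ρ hρ (single k r) = single k ((c : K) ^ k * ρ r) := by
  ext j
  rw [twist_coeff]
  by_cases h : j = k
  · subst h; rw [coeff_single_same, coeff_single_same]
  · rw [coeff_single_of_ne h, coeff_single_of_ne h, map_zero, mul_zero]

theorem twist_C (c : Kˣ) (ρ : K →+* K) (hρ : Function.Injective ρ) (r : K) :
    twist c ρ hρ (HahnSeries.C r) = HahnSeries.C (ρ r) := by
  rw [C_apply, twist_single, zpow_zero, one_mul, C_apply]

theorem C_mul_coeff (r : K) (x : HahnSeries ℤ K) (a : ℤ) :
    (HahnSeries.C r * x).coeff a = r * x.coeff a := by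
  have h := coeff_single_mul_add (r := r) (x := x) (a := a) (b := (0 : ℤ))
  rw [add_zero] at h
  rw [C_apply]
  exact h

theorem single_one_pow (k : ℕ) : (single (1 : ℤ) (1 : K)) ^ k = single (k : ℤ) 1 := by
  induction k with
  | zero => rw [pow_zero]; exact single_zero_one.symm
  | succ n ih =>
    rw [pow_succ, ih, single_mul_single, mul_one]
    norm_num

theorem single_one_zpow (ν : ℤ) : (single (1 : ℤ) (1 : K)) ^ ν = single ν 1 := by
  cases ν with
  | ofNat k => rw [Int.ofNat_eq_coe, zpow_natCast, single_one_pow]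
  | negSucc k =>
    rw [zpow_negSucc, single_one_pow]
    have h : single (Int.negSucc k) (1 : K) * single ((k + 1 : ℕ) : ℤ) 1 = 1 := by
      rw [single_mul_single, mul_one]
      have : Int.negSucc k + ((k + 1 : ℕ) : ℤ) = 0 := by
        rw [Int.negSucc_eq]; push_cast; ring
      rw [this]
      exact single_zero_one
    exact (eq_inv_of_mul_eq_one_left h).symm

end Twist

section Embed
open MvPolynomial
variable (F : Type*) [Field F] (m : ℕ)

/-- The ring embedding `F[x₁,…,x_{m+1}] → F(x₂,…,x_{m+1})((x₁))`. -/
def psi : MvPolynomial (Fin (m + 1)) F →+* LaurentSeries (MvRat F m) :=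
  (((HahnSeries.ofPowerSeries ℤ (MvRat F m)).comp Polynomial.coeToPowerSeries.ringHom).comp
    (Polynomial.mapRingHom (algebraMap (MvPolynomial (Fin m) F) (MvRat F m)))).comp
    (MvPolynomial.finSuccEquiv F m).toAlgHom.toRingHom

theorem psi_apply (p : MvPolynomial (Fin (m + 1)) F) :
    psi F m p = HahnSeries.ofPowerSeries ℤ (MvRat F m)
      ((Polynomial.map (algebraMap (MvPolynomial (Fin m) F) (MvRat F m))
        ((MvPolynomial.finSuccEquiv F m) p) : Polynomial (MvRat F m)) : PowerSeries (MvRat F m)) :=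
  rfl

theorem psi_injective : Function.Injective (psi F m) := by
  intro p q h
  rw [psi_apply, psi_apply] at h
  apply (MvPolynomial.finSuccEquiv F m).injective
  apply Polynomial.map_injective _ (IsFractionRing.injective (MvPolynomial (Fin m) F) (MvRat F m))
  apply Polynomial.coe_injective
  exact HahnSeries.ofPowerSeries_injective h

/-- The embedding `F(x₁,…,x_{m+1}) → F(x₂,…,x_{m+1})((x₁))`. -/
def phi : MvRat F (m + 1) →+* LaurentSeries (MvRat F m) :=
  IsFractionRing.lift (psi_injective F m)

theorem phi_alg (p : MvPolynomial (Fin (m + 1)) F) :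
    phi F m (algebraMap _ _ p) = psi F m p :=
  IsFractionRing.lift_algebraMap _ _

theorem phi_xv0 : phi F m (xv 0) = single 1 1 := by
  rw [xv, phi_alg, psi_apply, MvPolynomial.finSuccEquiv_X_zero, Polynomial.map_X,
    Polynomial.coe_X, ofPowerSeries_X]

theorem phi_xvs (j : Fin m) : phi F m (xv j.succ) =
    HahnSeries.C (algebraMap (MvPolynomial (Fin m) F) (MvRat F m) (MvPolynomial.X j)) := by
  rw [xv, phi_alg, psi_apply, MvPolynomial.finSuccEquiv_X_succ, Polynomial.map_C,
    Polynomial.coe_C, ofPowerSeries_C]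

theorem algF_eq (a : F) : algebraMap F (MvRat F (m + 1)) a =
    algebraMap (MvPolynomial (Fin (m + 1)) F) (MvRat F (m + 1)) (MvPolynomial.C a) := by
  rw [IsScalarTower.algebraMap_apply F (MvPolynomial (Fin (m + 1)) F), MvPolynomial.algebraMap_eq]

theorem algF_eq' (a : F) : algebraMap F (MvRat F m) a =
    algebraMap (MvPolynomial (Fin m) F) (MvRat F m) (MvPolynomial.C a) := by
  rw [IsScalarTower.algebraMap_apply F (MvPolynomial (Fin m) F), MvPolynomial.algebraMap_eq]

theorem phi_algF (a : F) :
    phi F m (algebraMap F (MvRat F (m + 1)) a) = HahnSeries.C (algebraMap F (MvRat F m) a) := by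
  rw [algF_eq, phi_alg]
  have h1 : (MvPolynomial.finSuccEquiv F m) (MvPolynomial.C a)
      = Polynomial.C (MvPolynomial.C a) := by
    simp [MvPolynomial.finSuccEquiv_apply]
  rw [psi_apply, h1, Polynomial.map_C, Polynomial.coe_C, ofPowerSeries_C, algF_eq']

theorem phi_xv0_zpow (ν : ℤ) : phi F m (xv 0 ^ ν) = single ν 1 := by
  rw [map_zpow₀, phi_xv0, single_one_zpow]

/-- The ring hom `F[x₂,…,x_{m+1}] → F(x₁,…,x_{m+1})` sending `Xⱼ` to `x_{j+1}`. -/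
def iotaHom : MvPolynomial (Fin m) F →+* MvRat F (m + 1) :=
  (algebraMap (MvPolynomial (Fin (m + 1)) F) (MvRat F (m + 1))).comp
    (MvPolynomial.rename (Fin.succ)).toRingHom

theorem iotaHom_injective : Function.Injective (iotaHom F m) :=
  (IsFractionRing.injective _ _).comp
    (MvPolynomial.rename_injective _ (Fin.succ_injective m))

/-- The embedding `F(x₂,…,x_{m+1}) → F(x₁,…,x_{m+1})`. -/
def iota : MvRat F m →+* MvRat F (m + 1) :=
  IsFractionRing.lift (iotaHom_injective F m)

theorem iota_alg (p : MvPolynomial (Fin m) F) :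
    iota F m (algebraMap _ _ p) =
      algebraMap (MvPolynomial (Fin (m + 1)) F) (MvRat F (m + 1))
        (MvPolynomial.rename Fin.succ p) :=
  IsFractionRing.lift_algebraMap _ _

theorem iota_X (j : Fin m) :
    iota F m (algebraMap (MvPolynomial (Fin m) F) (MvRat F m) (MvPolynomial.X j))
      = xv j.succ := by
  rw [iota_alg, MvPolynomial.rename_X, xv]

theorem iota_algF (a : F) :
    iota F m (algebraMap F (MvRat F m) a) = algebraMap F (MvRat F (m + 1)) a := by
  rw [algF_eq', iota_alg, MvPolynomial.rename_C, ← algF_eq]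

theorem iota_injective : Function.Injective (iota F m) :=
  (iota F m).injective

theorem phi_iota (b : MvRat F m) : phi F m (iota F m b) = HahnSeries.C b := by
  have h : (phi F m).comp (iota F m) = HahnSeries.C := by
    apply IsLocalization.ringHom_ext (nonZeroDivisors (MvPolynomial (Fin m) F))
    apply MvPolynomial.ringHom_ext
    · intro a
      simp only [RingHom.coe_comp, Function.comp_apply]
      rw [← MvPolynomial.algebraMap_eq, ← IsScalarTower.algebraMap_apply F (MvPolynomial (Fin m) F),
        iota_algF, phi_algF]
    · intro j
      simp only [RingHom.coe_comp, Function.comp_apply]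
      rw [iota_X, phi_xvs]
  exact DFunLike.congr_fun h b

theorem hat_le_range : (hatField F (m + 1)).carrier ⊆ Set.range (iota F m) := by
  have : hatField F (m + 1) ≤ (iota F m).fieldRange := by
    apply Subfield.closure_le.mpr
    rintro u (⟨a, rfl⟩ | ⟨i, hi, rfl⟩)
    · exact ⟨algebraMap F (MvRat F m) a, iota_algF F m a⟩
    · obtain ⟨j, rfl⟩ : ∃ j : Fin m, i = j.succ :=
        ⟨i.pred hi, (Fin.succ_pred i hi).symm⟩
      exact ⟨algebraMap (MvPolynomial (Fin m) F) (MvRat F m) (MvPolynomial.X j), iota_X F m j⟩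
  intro u hu
  obtain ⟨b, hb, rfl⟩ := this hu
  exact ⟨b, rfl⟩

theorem range_le_hat (b : MvRat F m) : iota F m b ∈ hatField F (m + 1) := by
  obtain ⟨p, r, hr, rfl⟩ := IsFractionRing.div_surjective (A := MvPolynomial (Fin m) F) b
  have key : ∀ p : MvPolynomial (Fin m) F,
      algebraMap (MvPolynomial (Fin (m + 1)) F) (MvRat F (m + 1))
        (MvPolynomial.rename Fin.succ p) ∈ hatField F (m + 1) := by
    intro p
    induction p using MvPolynomial.induction_on with
    | C a =>
      rw [MvPolynomial.rename_C, ← algF_eq]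
      exact Subfield.subset_closure (Or.inl ⟨a, rfl⟩)
    | add p q hp hq => rw [map_add, map_add]; exact add_mem hp hq
    | mul_X p j hp =>
      rw [map_mul, map_mul, MvPolynomial.rename_X]
      exact mul_mem hp (Subfield.subset_closure (Or.inr ⟨j.succ, Fin.succ_ne_zero j, rfl⟩))
  rw [map_div₀, iota_alg, iota_alg]
  exact div_mem (key p) (key r)

theorem phi_conj (θ : MvRat F (m + 1) ≃ₐ[F] MvRat F (m + 1)) (c : (MvRat F m)ˣ)
    (ρ : MvRat F m →+* MvRat F m) (hρ : Function.Injective ρ)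
    (hFa : ∀ a : F, ρ (algebraMap F (MvRat F m) a) = algebraMap F (MvRat F m) a)
    (h0 : phi F m (θ (xv 0)) = twist c ρ hρ (phi F m (xv 0)))
    (hs : ∀ j : Fin m, phi F m (θ (xv j.succ)) = twist c ρ hρ (phi F m (xv j.succ)))
    (u : MvRat F (m + 1)) : phi F m (θ u) = twist c ρ hρ (phi F m u) := by
  have h : (phi F m).comp θ.toAlgHom.toRingHom = (twist c ρ hρ).comp (phi F m) := by
    apply IsLocalization.ringHom_ext (nonZeroDivisors (MvPolynomial (Fin (m + 1)) F))
    apply MvPolynomial.ringHom_ext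
    · intro a
      simp only [RingHom.coe_comp, Function.comp_apply, AlgHom.coe_toRingHom,
        AlgEquiv.toAlgHom_eq_coe, AlgHom.coe_coe, AlgHom.toRingHom_eq_coe, RingHom.coe_coe]
      rw [← MvPolynomial.algebraMap_eq,
        ← IsScalarTower.algebraMap_apply F (MvPolynomial (Fin (m + 1)) F)]
      erw [AlgEquiv.commutes]
      rw [phi_algF, twist_C, hFa]
    · intro i
      simp only [RingHom.coe_comp, Function.comp_apply, AlgHom.coe_toRingHom,
        AlgEquiv.toAlgHom_eq_coe, AlgHom.coe_coe, AlgHom.toRingHom_eq_coe, RingHom.coe_coe]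
      rcases eq_or_ne i 0 with rfl | hi
      · exact h0
      · obtain ⟨j, rfl⟩ : ∃ j : Fin m, i = j.succ := ⟨i.pred hi, (Fin.succ_pred i hi).symm⟩
        exact hs j
  have := DFunLike.congr_fun h u
  simpa using this

end Embed

end Stmt3Aux
end Stmt3Aux

set_option maxHeartbeats 1000000 in
set_option synthInstance.maxHeartbeats 400000 in
theorem stmt_3' {F : Type*} [Field F] [CharZero F] {n : ℕ} [NeZero n]
    (q : F) (hq0 : q ≠ 0) (hq : ∀ m : ℤ, m ≠ 0 → q ^ m ≠ 1)
    (θ : Fin n → (MvRat F n ≃ₐ[F] MvRat F n))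
    (hθfix : ∀ i l : Fin n, i ≠ l → θ i (xv l) = xv l)
    (hθ0 : θ 0 (xv 0) = algebraMap F (MvRat F n) q * xv 0)
    (hθ : ∀ i : Fin n, i ≠ 0 →
      θ i (xv i) = xv i + 1 ∨ θ i (xv i) = algebraMap F (MvRat F n) q * xv i)
    (c : Fin n → F) (hc : ∀ i, c i ≠ 0)
    (ν : ℤ) (f g fν : MvRat F n)
    (hfL : IsLaurent (hatField F n) (xv 0) f)
    (hgL : IsLaurent (hatField F n) (xv 0) g)
    (hfν : ∃ h ∈ hatField F n, fν = h * xv 0 ^ ν)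
    (hdecomp : f = algebraMap F (MvRat F n) (q ^ (-ν)) * θ 0 g - g + fν) :
    (∃ g' : Fin n → MvRat F n,
        f = (algebraMap F (MvRat F n) (q ^ (-ν)) * θ 0 (g' 0) - g' 0) +
          ∑ i ∈ Finset.univ.erase (0 : Fin n),
            (algebraMap F (MvRat F n) (c i) * θ i (g' i) - g' i)) ↔
    (∃ g' : Fin n → MvRat F n,
        fν = ∑ i ∈ Finset.univ.erase (0 : Fin n),
          (algebraMap F (MvRat F n) (c i) * θ i (g' i) - g' i)) := by
  classical
  obtain ⟨m, rfl⟩ := Nat.exists_eq_succ_of_ne_zero (NeZero.ne n)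
  open Stmt3Aux HahnSeries in
  constructor
  · rintro ⟨g', hsum⟩
    -- the additive "take the coefficient of x₁^ν" map
    set CC : MvRat F (m + 1) →+ MvRat F (m + 1) :=
      ((iota F m).toAddMonoidHom.comp (HahnSeries.coeff.addMonoidHom ν)).comp
        (phi F m).toAddMonoidHom with hCCdef
    have hCC : ∀ u, CC u = iota F m ((phi F m u).coeff ν) := fun u => rfl
    have hqK : algebraMap F (MvRat F m) q ≠ 0 := fun h =>
      hq0 ((algebraMap F (MvRat F m)).injective (by rw [h, map_zero]))
    -- conjugation identity for θ 0
    have conj0 : ∀ u, phi F m (θ 0 u) =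
        twist (Units.mk0 _ hqK) (RingHom.id _) Function.injective_id (phi F m u) := by
      apply phi_conj
      · intro a; rfl
      · rw [hθ0, map_mul, phi_algF, phi_xv0, twist_single, C_apply, single_mul_single,
          zero_add, mul_one, zpow_one, Units.val_mk0, RingHom.id_apply, mul_one]
      · intro j
        rw [hθfix 0 j.succ (Fin.succ_ne_zero j).symm, phi_xvs, twist_C, RingHom.id_apply]
    -- the first operator kills the ν-th coefficient
    have key0 : ∀ u : MvRat F (m + 1),
        CC (algebraMap F (MvRat F (m + 1)) (q ^ (-ν)) * θ 0 u - u) = 0 := by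
      intro u
      rw [map_sub, hCC, hCC]
      have h1 : (phi F m (algebraMap F (MvRat F (m + 1)) (q ^ (-ν)) * θ 0 u)).coeff ν
          = (phi F m u).coeff ν := by
        rw [map_mul, phi_algF, conj0, C_mul_coeff, twist_coeff, Units.val_mk0,
          RingHom.id_apply, map_zpow₀, ← mul_assoc, ← zpow_add₀ hqK, neg_add_cancel,
          zpow_zero, one_mul]
      rw [h1, sub_self]
    -- conjugation identity for θ i, i ≠ 0
    have main_i : ∀ i : Fin (m + 1), i ≠ 0 → ∀ u : MvRat F (m + 1),
        iota F m ((phi F m (θ i u)).coeff ν) = θ i (iota F m ((phi F m u).coeff ν)) := by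
      intro i hi
      have hxvmem : ∀ l : Fin (m + 1), l ≠ 0 → xv l ∈ hatField F (m + 1) :=
        fun l hl => Subfield.subset_closure (Or.inr ⟨l, hl, rfl⟩)
      have halgmem : ∀ a : F, algebraMap F (MvRat F (m + 1)) a ∈ hatField F (m + 1) :=
        fun a => Subfield.subset_closure (Or.inl ⟨a, rfl⟩)
      have hmapsto : ∀ u ∈ hatField F (m + 1), θ i u ∈ hatField F (m + 1) := by
        have hle : hatField F (m + 1) ≤
            Subfield.comap ((θ i : MvRat F (m + 1) ≃ₐ[F] MvRat F (m + 1)) :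
              MvRat F (m + 1) →+* MvRat F (m + 1)) (hatField F (m + 1)) := by
          apply Subfield.closure_le.mpr
          rintro u (⟨a, rfl⟩ | ⟨l, hl, rfl⟩)
          · rw [SetLike.mem_coe, Subfield.mem_comap]
            show θ i (algebraMap F (MvRat F (m + 1)) a) ∈ _
            rw [AlgEquiv.commutes]
            exact halgmem a
          · rw [SetLike.mem_coe, Subfield.mem_comap]
            show θ i (xv l) ∈ _
            rcases eq_or_ne i l with rfl | hil
            · rcases hθ i hi with h | h
              · rw [h]; exact add_mem (hxvmem i hi) (one_mem _)
              · rw [h]; exact mul_mem (halgmem q) (hxvmem i hi)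
            · rw [hθfix i l hil]
              exact hxvmem l (Set.mem_setOf.mp hl)
        intro u hu
        have := hle hu
        rwa [Subfield.mem_comap] at this
      have hrange : ∀ b : MvRat F m, ∃ b' : MvRat F m, iota F m b' = θ i (iota F m b) := by
        intro b
        obtain ⟨b', hb'⟩ := hat_le_range F m (hmapsto _ (range_le_hat F m b))
        exact ⟨b', hb'⟩
      choose ρf hρf using hrange
      have hinj := iota_injective F m
      have hρ1 : ρf 1 = 1 := hinj (by rw [hρf]; simp)
      have hρ0 : ρf 0 = 0 := hinj (by rw [hρf]; simp)
      have hρadd : ∀ a b, ρf (a + b) = ρf a + ρf b := fun a b =>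
        hinj (by rw [hρf]; simp [map_add, hρf])
      have hρmul : ∀ a b, ρf (a * b) = ρf a * ρf b := fun a b =>
        hinj (by rw [hρf]; simp [map_mul, hρf])
      set ρ : MvRat F m →+* MvRat F m :=
        { toFun := ρf, map_one' := hρ1, map_mul' := hρmul,
          map_zero' := hρ0, map_add' := hρadd } with hρdef
      have hρapp : ∀ b, ρ b = ρf b := fun b => rfl
      have hρ : Function.Injective ρ := by
        intro a b hab
        apply hinj
        apply (θ i).injective
        rw [← hρf, ← hρf, ← hρapp, ← hρapp, hab]
      have hFa : ∀ a : F, ρ (algebraMap F (MvRat F m) a) = algebraMap F (MvRat F m) a := by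
        intro a
        apply hinj
        rw [hρapp, hρf, iota_algF, AlgEquiv.commutes]
      have conj_i : ∀ u, phi F m (θ i u) = twist 1 ρ hρ (phi F m u) := by
        apply phi_conj F m (θ i) 1 ρ hρ hFa
        · rw [hθfix i 0 hi, phi_xv0, twist_single, RingHom.map_one]
          simp
        · intro j
          have h2 : θ i (xv j.succ) =
              iota F m (ρ (algebraMap (MvPolynomial (Fin m) F) (MvRat F m)
                (MvPolynomial.X j))) := by
            rw [hρapp, hρf, iota_X]
          rw [h2, phi_iota, phi_xvs, twist_C]
      intro u
      rw [conj_i u, twist_coeff, Units.val_one, one_zpow, one_mul, hρapp, hρf]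
    -- the i-th operator commutes with CC
    have key_i : ∀ i : Fin (m + 1), i ≠ 0 → ∀ u : MvRat F (m + 1),
        CC (algebraMap F (MvRat F (m + 1)) (c i) * θ i u - u)
          = algebraMap F (MvRat F (m + 1)) (c i) * θ i (CC u) - CC u := by
      intro i hi u
      rw [map_sub, hCC, hCC]
      congr 1
      rw [map_mul, phi_algF, C_mul_coeff, map_mul, iota_algF, main_i i hi]
    -- compute CC fν
    obtain ⟨h, hh, rfl⟩ := hfν
    obtain ⟨b, hb⟩ := hat_le_range F m hh
    have hCCfν : CC (h * xv 0 ^ ν) = h := by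
      rw [hCC, map_mul, ← hb, phi_iota, phi_xv0_zpow, C_mul_coeff, coeff_single_same,
        mul_one, hb]
    -- CC of both sides of the two equations
    have e1 : CC f = h := by
      rw [hdecomp, map_add, key0, zero_add, hCCfν]
    have e2 : CC f = ∑ i ∈ Finset.univ.erase (0 : Fin (m + 1)),
        (algebraMap F (MvRat F (m + 1)) (c i) * θ i (CC (g' i)) - CC (g' i)) := by
      rw [hsum, map_add, key0, zero_add, map_sum]
      exact Finset.sum_congr rfl fun i hi => key_i i (Finset.mem_erase.mp hi).1 (g' i)
    -- assemble the witness
    refine ⟨fun i => CC (g' i) * xv 0 ^ ν, ?_⟩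
    have e3 : h = ∑ i ∈ Finset.univ.erase (0 : Fin (m + 1)),
        (algebraMap F (MvRat F (m + 1)) (c i) * θ i (CC (g' i)) - CC (g' i)) := by
      rw [← e1, e2]
    calc h * xv 0 ^ ν
        = (∑ i ∈ Finset.univ.erase (0 : Fin (m + 1)),
            (algebraMap F (MvRat F (m + 1)) (c i) * θ i (CC (g' i)) - CC (g' i))) * xv 0 ^ ν := by
          rw [← e3]
      _ = ∑ i ∈ Finset.univ.erase (0 : Fin (m + 1)),
            (algebraMap F (MvRat F (m + 1)) (c i) * θ i (CC (g' i) * xv 0 ^ ν)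
              - CC (g' i) * xv 0 ^ ν) := by
          rw [Finset.sum_mul]
          refine Finset.sum_congr rfl fun i hi => ?_
          rw [map_mul, map_zpow₀, hθfix i 0 (Finset.mem_erase.mp hi).1, sub_mul, mul_assoc]
  · rintro ⟨g'', hsum⟩
    refine ⟨fun i => if i = 0 then g else g'' i, ?_⟩
    beta_reduce
    have h00 : (if (0 : Fin (m + 1)) = 0 then g else g'' 0) = g := if_pos rfl
    have e : ∑ i ∈ Finset.univ.erase (0 : Fin (m + 1)),
        (algebraMap F (MvRat F (m + 1)) (c i) * θ i (if i = 0 then g else g'' i)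
          - (if i = 0 then g else g'' i))
        = ∑ i ∈ Finset.univ.erase (0 : Fin (m + 1)),
          (algebraMap F (MvRat F (m + 1)) (c i) * θ i (g'' i) - g'' i) := by
      refine Finset.sum_congr rfl fun i hi => ?_
      rw [if_neg (Finset.mem_erase.mp hi).1]
    rw [h00, e, ← hsum, ← hdecomp]


set_option maxHeartbeats 1000000 in
/-- **Proposition: q-summability of Laurent polynomials, special case.**
Suppose `θ_{x₁} = τ_{q,x₁}`, let `ν ∈ ℤ`, and let `f ∈ F(x̂₁)[x₁,x₁⁻¹]` be written as
`f = q^{−ν}τ_{q,x₁}(g) − g + f_ν` with `g ∈ F(x̂₁)[x₁,x₁⁻¹]` and `f_ν ∈ W_ν`. Let the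
remaining operators carry nonzero constants `c₂,…,cₙ`. Then `f` is
`(q^{−ν}τ_{q,x₁}, c₂θ_{x₂},…,cₙθ_{xₙ})`-summable in `F(x)` iff `f_ν` is
`(c₂θ_{x₂},…,cₙθ_{xₙ})`-summable in `F(x)`. -/
theorem stmt_3 {F : Type*} [Field F] [CharZero F] {n : ℕ} [NeZero n]
    (q : F) (hq0 : q ≠ 0) (hq : ∀ m : ℤ, m ≠ 0 → q ^ m ≠ 1)
    (θ : Fin n → (MvRat F n ≃ₐ[F] MvRat F n))
    (hθfix : ∀ i l : Fin n, i ≠ l → θ i (xv l) = xv l)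
    (hθ0 : θ 0 (xv 0) = algebraMap F (MvRat F n) q * xv 0)
    (hθ : ∀ i : Fin n, i ≠ 0 →
      θ i (xv i) = xv i + 1 ∨ θ i (xv i) = algebraMap F (MvRat F n) q * xv i)
    (c : Fin n → F) (hc : ∀ i, c i ≠ 0)
    (ν : ℤ) (f g fν : MvRat F n)
    (hfL : IsLaurent (hatField F n) (xv 0) f)
    (hgL : IsLaurent (hatField F n) (xv 0) g)
    (hfν : ∃ h ∈ hatField F n, fν = h * xv 0 ^ ν)
    (hdecomp : f = algebraMap F (MvRat F n) (q ^ (-ν)) * θ 0 g - g + fν) :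
    (∃ g' : Fin n → MvRat F n,
        f = (algebraMap F (MvRat F n) (q ^ (-ν)) * θ 0 (g' 0) - g' 0) +
          ∑ i ∈ Finset.univ.erase (0 : Fin n),
            (algebraMap F (MvRat F n) (c i) * θ i (g' i) - g' i)) ↔
    (∃ g' : Fin n → MvRat F n,
        fν = ∑ i ∈ Finset.univ.erase (0 : Fin n),
          (algebraMap F (MvRat F n) (c i) * θ i (g' i) - g' i)) := by
  exact stmt_3' q hq0 hq θ hθfix hθ0 hθ c hc ν f g fν hfL hgL hfν hdecomp
end

section
/- Let p ∈ F[x] be a nonconstant polynomial. Then the quotient group G^σ/G^σ_p of the free abelian group G^σ = ⟨σ_{y₁},…,σ_{y_k}⟩ by the isotropy group G^σ_p of p in G^σ is a free abelian group. -/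
noncomputable section

/-- The field of rational functions `F(y₁,…,y_k,z₁,…,z_m)`. -/
abbrev MvRatS (F : Type*) [Field F] (k m : ℕ) := FractionRing (MvPolynomial (Fin k ⊕ Fin m) F)

/-- The image of a variable in `F(y,z)`. -/
def xvS {F : Type*} [Field F] {k m : ℕ} (i : Fin k ⊕ Fin m) : MvRatS F k m :=
  algebraMap (MvPolynomial (Fin k ⊕ Fin m) F) (MvRatS F k m) (MvPolynomial.X i)

end

set_option synthInstance.maxHeartbeats 1000000
set_option maxHeartbeats 1000000
noncomputable section
namespace Stmt4Aux

open MvPolynomial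

variable {F : Type*} [Field F] {k m : ℕ}

lemma poly_eq_zero_of_vanish [CharZero F] (g : Polynomial F) {n : ℕ} (hn : n ≠ 0)
    (h : ∀ j : ℕ, g.eval ((j * n : ℕ) : F) = 0) : g = 0 := by
  apply Polynomial.eq_zero_of_infinite_isRoot
  apply Set.infinite_of_injective_forall_mem (f := fun j : ℕ => ((j * n : ℕ) : F))
  · intro a b hab
    have h2 : a * n = b * n := Nat.cast_injective hab
    exact Nat.eq_of_mul_eq_mul_right (Nat.pos_of_ne_zero hn) h2
  · intro j; exact h j

lemma poly_const_of [CharZero F] (f : Polynomial F) {n : ℕ} (hn : n ≠ 0) (b : F)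
    (h : ∀ j : ℕ, f.eval ((j * n : ℕ) : F) = b) : f = Polynomial.C b := by
  have h0 := poly_eq_zero_of_vanish (f - Polynomial.C b) hn (by
    intro j
    simp only [Polynomial.eval_sub, Polynomial.eval_C, h j, sub_self])
  exact sub_eq_zero.mp h0

lemma c_eq_one [CharZero F] (f : Polynomial F) {n : ℕ} (hn : n ≠ 0) (c aF : F) (ha : aF ≠ 0)
    (h : ∀ j : ℕ, f.eval ((j * n : ℕ) : F) = c ^ j * aF) : c = 1 := by
  have hg : f.comp (Polynomial.X + Polynomial.C (n : F)) - Polynomial.C c * f = 0 := by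
    apply poly_eq_zero_of_vanish _ hn
    intro j
    have h1 := h (j + 1)
    have h2 := h j
    have he : ((j + 1) * n : ℕ) = (j * n + n : ℕ) := by ring
    rw [he] at h1
    push_cast at h1 h2 ⊢
    simp only [Polynomial.eval_sub, Polynomial.eval_comp, Polynomial.eval_mul,
      Polynomial.eval_C, Polynomial.eval_add, Polynomial.eval_X]
    rw [h1, h2, pow_succ]
    ring
  have hcomp : f.comp (Polynomial.X + Polynomial.C (n : F)) = Polynomial.C c * f :=
    sub_eq_zero.mp hg
  have hf0 : f ≠ 0 := by
    intro hz
    apply ha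
    have := h 0
    simpa [hz] using this.symm
  have hl : (f.comp (Polynomial.X + Polynomial.C (n : F))).leadingCoeff = f.leadingCoeff := by
    rw [Polynomial.leadingCoeff_comp (by rw [Polynomial.natDegree_X_add_C]; exact one_ne_zero)]
    rw [(Polynomial.monic_X_add_C ((n : F))).leadingCoeff]
    simp
  rw [hcomp] at hl
  have hlc : f.leadingCoeff ≠ 0 := Polynomial.leadingCoeff_ne_zero.mpr hf0
  have h4 : (Polynomial.C c * f).leadingCoeff = c * f.leadingCoeff := by
    rw [Polynomial.leadingCoeff_mul, Polynomial.leadingCoeff_C]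
  have h5 : c * f.leadingCoeff = f.leadingCoeff := by rw [← h4, hl]
  have h6 : (c - 1) * f.leadingCoeff = 0 := by linear_combination h5
  rcases mul_eq_zero.mp h6 with h7 | h7
  · exact sub_eq_zero.mp h7
  · exact absurd h7 hlc

/-- Shift endomorphism of the polynomial ring: `X i ↦ X i + a i`. -/
def shiftF (a : (Fin k ⊕ Fin m) → F) :
    MvPolynomial (Fin k ⊕ Fin m) F →ₐ[F] MvPolynomial (Fin k ⊕ Fin m) F :=
  aeval (fun i => X i + C (a i))

/-- Integer vector to constant vector. -/
def ev (γ : Fin k → ℤ) : (Fin k ⊕ Fin m) → F :=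
  Sum.elim (fun j => (γ j : F)) (fun _ => 0)

/-- Generic shift `X i ↦ X i + a i · t` into polynomials over `F[t]`. -/
def Psi (a : (Fin k ⊕ Fin m) → F) :
    MvPolynomial (Fin k ⊕ Fin m) F →ₐ[F] MvPolynomial (Fin k ⊕ Fin m) (Polynomial F) :=
  aeval (fun i => X i + C (Polynomial.C (a i) * Polynomial.X))

lemma map_eval_Psi (a : (Fin k ⊕ Fin m) → F) (s : F) (g : MvPolynomial (Fin k ⊕ Fin m) F) :
    MvPolynomial.map (Polynomial.evalRingHom s) (Psi a g) = shiftF (fun i => a i * s) g := by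
  have : ((MvPolynomial.map (Polynomial.evalRingHom s)).comp (Psi a : _ →+* _) :
        MvPolynomial (Fin k ⊕ Fin m) F →+* _)
      = ((shiftF (fun i => a i * s)).toRingHom :
        MvPolynomial (Fin k ⊕ Fin m) F →+* MvPolynomial (Fin k ⊕ Fin m) F) := by
    apply MvPolynomial.ringHom_ext
    · intro r
      simp [Psi, shiftF, algebraMap_eq]
    · intro i
      simp [Psi, shiftF]
  exact DFunLike.congr_fun this g

lemma coeff_Psi_eval (a : (Fin k ⊕ Fin m) → F) (s : F) (g : MvPolynomial (Fin k ⊕ Fin m) F)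
    (μ : (Fin k ⊕ Fin m) →₀ ℕ) :
    (MvPolynomial.coeff μ (Psi a g)).eval s
      = MvPolynomial.coeff μ (shiftF (fun i => a i * s) g) := by
  rw [← map_eval_Psi, MvPolynomial.coeff_map]
  rfl

lemma shiftF_zero (g : MvPolynomial (Fin k ⊕ Fin m) F) : shiftF (fun _ => (0:F)) g = g := by
  have : (shiftF (fun _ => (0:F)) : MvPolynomial (Fin k ⊕ Fin m) F →ₐ[F] _)
      = AlgHom.id F _ := by
    apply MvPolynomial.algHom_ext
    intro i
    simp [shiftF]
  rw [this]; rfl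

variable (σ : Fin k → (MvRatS F k m ≃ₐ[F] MvRatS F k m))

lemma pow_sigma_self (hσ : ∀ j, σ j (xvS (Sum.inl j)) = xvS (Sum.inl j) + 1)
    (j : Fin k) (t : ℕ) :
    (σ j ^ t) (xvS (Sum.inl j) : MvRatS F k m) = xvS (Sum.inl j) + (t : MvRatS F k m) := by
  induction t with
  | zero => simp
  | succ t ih =>
    rw [pow_succ, AlgEquiv.mul_apply, hσ j, map_add, ih, map_one]
    push_cast
    ring

lemma zpow_sigma_self (hσ : ∀ j, σ j (xvS (Sum.inl j)) = xvS (Sum.inl j) + 1)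
    (j : Fin k) (t : ℤ) :
    (σ j ^ t) (xvS (Sum.inl j) : MvRatS F k m) = xvS (Sum.inl j) + (t : MvRatS F k m) := by
  cases t with
  | ofNat n =>
    rw [Int.ofNat_eq_coe, zpow_natCast]
    simpa using pow_sigma_self σ hσ j n
  | negSucc n =>
    apply (σ j ^ ((n + 1 : ℕ) : ℤ)).injective
    rw [← AlgEquiv.mul_apply, ← zpow_add]
    have he : ((n + 1 : ℕ) : ℤ) + (Int.negSucc n) = 0 := by
      rw [Int.negSucc_eq]; push_cast; ring
    rw [he, zpow_zero, AlgEquiv.one_apply, zpow_natCast, map_add,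
      pow_sigma_self σ hσ j (n + 1), map_intCast]
    push_cast [Int.negSucc_eq]
    ring

lemma zpow_sigma_fix (hσfix : ∀ j i, i ≠ Sum.inl j → σ j (xvS i) = xvS i)
    (j : Fin k) (i : Fin k ⊕ Fin m) (hi : i ≠ Sum.inl j) (t : ℤ) :
    (σ j ^ t) (xvS i : MvRatS F k m) = xvS i := by
  have hnat : ∀ s : ℕ, (σ j ^ s) (xvS i : MvRatS F k m) = xvS i := by
    intro s
    induction s with
    | zero => simp
    | succ s ih => rw [pow_succ, AlgEquiv.mul_apply, hσfix j i hi, ih]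
  cases t with
  | ofNat n => rw [Int.ofNat_eq_coe, zpow_natCast]; exact hnat n
  | negSucc n =>
    apply (σ j ^ ((n + 1 : ℕ) : ℤ)).injective
    rw [← AlgEquiv.mul_apply, ← zpow_add]
    have he : ((n + 1 : ℕ) : ℤ) + (Int.negSucc n) = 0 := by
      rw [Int.negSucc_eq]; push_cast; ring
    rw [he, zpow_zero, AlgEquiv.one_apply, zpow_natCast, hnat (n + 1)]

lemma list_prod_xvS (hσ : ∀ j, σ j (xvS (Sum.inl j)) = xvS (Sum.inl j) + 1)
    (hσfix : ∀ j i, i ≠ Sum.inl j → σ j (xvS i) = xvS i)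
    (α : Fin k → ℤ) (l : List (Fin k)) (i : Fin k ⊕ Fin m) :
    ((l.map fun j => σ j ^ α j).prod) (xvS i : MvRatS F k m)
      = xvS i + algebraMap F (MvRatS F k m)
          ((l.map fun j => if i = Sum.inl j then (α j : F) else 0).sum) := by
  induction l with
  | nil => simp
  | cons j l ih =>
    rw [List.map_cons, List.prod_cons, AlgEquiv.mul_apply, List.map_cons, List.sum_cons, ih,
      map_add, map_add, AlgEquiv.commutes]
    by_cases hi : i = Sum.inl j
    · subst hi
      rw [if_pos rfl, zpow_sigma_self σ hσ, map_intCast]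
      ring
    · rw [if_neg hi, zpow_sigma_fix σ hσfix j i hi, map_zero]
      ring

lemma theta_xvS (hσ : ∀ j, σ j (xvS (Sum.inl j)) = xvS (Sum.inl j) + 1)
    (hσfix : ∀ j i, i ≠ Sum.inl j → σ j (xvS i) = xvS i)
    (α : Fin k → ℤ) (i : Fin k ⊕ Fin m) :
    thetaPowS σ α (xvS i : MvRatS F k m) = xvS i + algebraMap F (MvRatS F k m) (ev α i) := by
  rw [thetaPowS, list_prod_xvS σ hσ hσfix α]
  congr 1
  rw [Finset.sum_map_toList]
  cases i with
  | inl j0 =>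
    rw [show (∑ j : Fin k, if Sum.inl (β := Fin m) j0 = Sum.inl j then (α j : F) else 0)
        = ∑ j : Fin k, if j0 = j then (α j : F) else 0 from by
      apply Finset.sum_congr rfl; intro j _; simp [Sum.inl.injEq]]
    rw [Finset.sum_ite_eq]
    simp [ev]
  | inr j0 =>
    simp [ev]

lemma theta_algebraMap (hσ : ∀ j, σ j (xvS (Sum.inl j)) = xvS (Sum.inl j) + 1)
    (hσfix : ∀ j i, i ≠ Sum.inl j → σ j (xvS i) = xvS i)
    (α : Fin k → ℤ) (g : MvPolynomial (Fin k ⊕ Fin m) F) :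
    thetaPowS σ α (algebraMap (MvPolynomial (Fin k ⊕ Fin m) F) (MvRatS F k m) g)
      = algebraMap (MvPolynomial (Fin k ⊕ Fin m) F) (MvRatS F k m) (shiftF (ev α) g) := by
  have key : ((thetaPowS σ α).toAlgHom.comp
        (IsScalarTower.toAlgHom F (MvPolynomial (Fin k ⊕ Fin m) F) (MvRatS F k m)))
      = (IsScalarTower.toAlgHom F (MvPolynomial (Fin k ⊕ Fin m) F) (MvRatS F k m)).comp
        (shiftF (ev α)) := by
    apply MvPolynomial.algHom_ext
    intro i
    simp only [AlgHom.coe_comp, Function.comp_apply, IsScalarTower.coe_toAlgHom',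
      AlgEquiv.toAlgHom_eq_coe, AlgHom.coe_coe, AlgEquiv.coe_toAlgHom, shiftF, aeval_X]
    rw [show (algebraMap (MvPolynomial (Fin k ⊕ Fin m) F) (MvRatS F k m)) (X i)
        = xvS i from rfl,
      theta_xvS σ hσ hσfix α i, map_add]
    rw [← MvPolynomial.algebraMap_eq, ← IsScalarTower.algebraMap_apply]
    rfl
  exact DFunLike.congr_fun key g

end Stmt4Aux
end


set_option maxHeartbeats 1000000 in
/-- **Sato: `G^σ/G^σ_p` is free abelian.** Let `p ∈ F[x]` be nonconstant.
Then the quotient of the free abelian group `G^σ = ⟨σ_{y₁},…,σ_{y_k}⟩` (identified with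
`ℤ^k` via exponent vectors) by the isotropy group `G^σ_p` of `p` is a free abelian group. -/
theorem stmt_4 {F : Type*} [Field F] [CharZero F] {k m : ℕ}
    (q : F) (hq0 : q ≠ 0) (hq : ∀ l : ℤ, l ≠ 0 → q ^ l ≠ 1)
    (σ : Fin k → (MvRatS F k m ≃ₐ[F] MvRatS F k m))
    (hσ : ∀ j, σ j (xvS (Sum.inl j)) = xvS (Sum.inl j) + 1)
    (hσfix : ∀ j i, i ≠ Sum.inl j → σ j (xvS i) = xvS i)
    (τ : Fin m → (MvRatS F k m ≃ₐ[F] MvRatS F k m))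
    (hτ : ∀ j, τ j (xvS (Sum.inr j)) = algebraMap F (MvRatS F k m) q * xvS (Sum.inr j))
    (hτfix : ∀ j i, i ≠ Sum.inr j → τ j (xvS i) = xvS i)
    (hadd : ∀ α β : Fin k → ℤ, thetaPowS σ (α + β) = thetaPowS σ α * thetaPowS σ β)
    (h0 : thetaPowS σ (0 : Fin k → ℤ) = 1)
    (p : MvPolynomial (Fin k ⊕ Fin m) F) (hp : 0 < p.totalDegree) :
    Module.Free ℤ ((Fin k → ℤ) ⧸ isotropyZ (thetaPowS σ) hadd h0
      (algebraMap (MvPolynomial (Fin k ⊕ Fin m) F) (MvRatS F k m) p)) := by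
  classical
  have hinj : Function.Injective (algebraMap (MvPolynomial (Fin k ⊕ Fin m) F) (MvRatS F k m)) :=
    IsFractionRing.injective _ _
  have hp0 : p ≠ 0 := fun h => by simp [h] at hp
  obtain ⟨μ₀, hμ₀⟩ := MvPolynomial.ne_zero_iff.mp hp0
  have key : ∀ (α : Fin k → ℤ) (n : ℕ), n ≠ 0 →
      ((n : ℤ) • α) ∈ isotropyZ (thetaPowS σ) hadd h0
        (algebraMap (MvPolynomial (Fin k ⊕ Fin m) F) (MvRatS F k m) p) →
      α ∈ isotropyZ (thetaPowS σ) hadd h0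
        (algebraMap (MvPolynomial (Fin k ⊕ Fin m) F) (MvRatS F k m) p) := by
    intro α n hn hmem
    obtain ⟨c, hc, hcp⟩ := hmem
    have hiter : ∀ j : ℕ, thetaPowS σ (((j * n : ℕ) : ℤ) • α)
        (algebraMap (MvPolynomial (Fin k ⊕ Fin m) F) (MvRatS F k m) p)
        = algebraMap F (MvRatS F k m) (c ^ j)
          * algebraMap (MvPolynomial (Fin k ⊕ Fin m) F) (MvRatS F k m) p := by
      intro j
      induction j with
      | zero => simp [h0]
      | succ j ih =>
        have he : (((j + 1) * n : ℕ) : ℤ) • α = (n : ℤ) • α + ((j * n : ℕ) : ℤ) • α := by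
          rw [← add_smul]; congr 1; push_cast; ring
        rw [he, hadd, AlgEquiv.mul_apply, ih, map_mul, AlgEquiv.commutes, hcp, pow_succ,
          map_mul]
        ring
    have hshift : ∀ j : ℕ, Stmt4Aux.shiftF (Stmt4Aux.ev (((j * n : ℕ) : ℤ) • α)) p
        = MvPolynomial.C (c ^ j) * p := by
      intro j
      apply hinj
      rw [map_mul, ← Stmt4Aux.theta_algebraMap σ hσ hσfix, hiter j]
      congr 1
    have hev : ∀ j : ℕ, Stmt4Aux.ev (m := m) (((j * n : ℕ) : ℤ) • α)
        = fun i => Stmt4Aux.ev (m := m) α i * ((j * n : ℕ) : F) := by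
      intro j
      funext i
      cases i with
      | inl j' =>
        simp only [Stmt4Aux.ev, Sum.elim_inl, Pi.smul_apply, smul_eq_mul]
        push_cast
        ring
      | inr j' => simp [Stmt4Aux.ev]
    have hco : ∀ (μ : (Fin k ⊕ Fin m) →₀ ℕ) (j : ℕ),
        Polynomial.eval ((j * n : ℕ) : F)
          (MvPolynomial.coeff μ (Stmt4Aux.Psi (Stmt4Aux.ev α) p))
          = c ^ j * MvPolynomial.coeff μ p := by
      intro μ j
      rw [Stmt4Aux.coeff_Psi_eval, ← hev j, hshift j, MvPolynomial.coeff_C_mul]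
    have hc1 : c = 1 := Stmt4Aux.c_eq_one _ hn c _ hμ₀ (fun j => hco μ₀ j)
    have hfinal : Stmt4Aux.shiftF (Stmt4Aux.ev α) p = p := by
      apply MvPolynomial.ext
      intro μ
      have hconst := Stmt4Aux.poly_const_of
        (MvPolynomial.coeff μ (Stmt4Aux.Psi (Stmt4Aux.ev α) p)) hn (MvPolynomial.coeff μ p)
        (fun j => by rw [hco μ j, hc1, one_pow, one_mul])
      have h1 := Stmt4Aux.coeff_Psi_eval (Stmt4Aux.ev α) 1 p μ
      rw [hconst, Polynomial.eval_C,
        show (fun i => Stmt4Aux.ev α i * (1:F)) = Stmt4Aux.ev α from by funext i; ring] at h1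
      exact h1.symm
    refine ⟨1, one_ne_zero, ?_⟩
    rw [Stmt4Aux.theta_algebraMap σ hσ hσfix, hfinal, map_one, one_mul]
  haveI hfin : Module.Finite ℤ ((Fin k → ℤ) ⧸ isotropyZ (thetaPowS σ) hadd h0
      (algebraMap (MvPolynomial (Fin k ⊕ Fin m) F) (MvRatS F k m) p)) :=
    Module.Finite.of_surjective
      ((QuotientAddGroup.mk' (isotropyZ (thetaPowS σ) hadd h0
        (algebraMap (MvPolynomial (Fin k ⊕ Fin m) F) (MvRatS F k m) p))).toIntLinearMap)
      (QuotientAddGroup.mk'_surjective _)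
  haveI htf : NoZeroSMulDivisors ℤ ((Fin k → ℤ) ⧸ isotropyZ (thetaPowS σ) hadd h0
      (algebraMap (MvPolynomial (Fin k ⊕ Fin m) F) (MvRatS F k m) p)) := by
    constructor
    intro n x hx
    by_cases hn : n = 0
    · exact Or.inl hn
    right
    obtain ⟨α, rfl⟩ := QuotientAddGroup.mk'_surjective _ x
    have hsm : (QuotientAddGroup.mk' (isotropyZ (thetaPowS σ) hadd h0
        (algebraMap (MvPolynomial (Fin k ⊕ Fin m) F) (MvRatS F k m) p))) (n • α) = 0 := by
      rw [map_zsmul]; exact hx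
    have hmem : n • α ∈ isotropyZ (thetaPowS σ) hadd h0
        (algebraMap (MvPolynomial (Fin k ⊕ Fin m) F) (MvRatS F k m) p) :=
      (QuotientAddGroup.eq_zero_iff _).mp hsm
    have hmem' : ((n.natAbs : ℤ)) • α ∈ isotropyZ (thetaPowS σ) hadd h0
        (algebraMap (MvPolynomial (Fin k ⊕ Fin m) F) (MvRatS F k m) p) := by
      rcases Int.natAbs_eq n with h | h
      · rw [← h]; exact hmem
      · rw [show ((n.natAbs : ℤ)) • α = -(n • α) from by rw [← neg_smul]; congr 1; omega]
        exact neg_mem hmem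
    have hmemα := key α n.natAbs (Int.natAbs_ne_zero.mpr hn) hmem'
    exact (QuotientAddGroup.eq_zero_iff _).mpr hmemα
  exact Module.free_of_finite_type_torsion_free'
end

section
/- Let p ∈ F[x] be a nonconstant polynomial. Then the quotient group G^τ/G^τ_p of the free abelian group G^τ = ⟨τ_{q,z₁},…,τ_{q,z_m}⟩ by the isotropy group G^τ_p of p in G^τ is a free abelian group; equivalently, if τ₀ ∈ G^τ and τ₀^ℓ(p) = c·p for some nonzero integer ℓ and nonzero c ∈ F, then τ₀(p) = c̃·p for some nonzero c̃ ∈ F. -/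
noncomputable section
namespace Stmt5Aux

variable {F : Type*} [Field F] {k m : ℕ}

open MvPolynomial

/-- `θ` acts diagonally on the variables with weights `u`. -/
def DiagW (u : Fin k ⊕ Fin m → F) (θ : MvRatS F k m ≃ₐ[F] MvRatS F k m) : Prop :=
  ∀ i, θ (xvS i) = algebraMap F (MvRatS F k m) (u i) * xvS i

lemma diagW_one : DiagW (fun _ => (1 : F)) (1 : MvRatS F k m ≃ₐ[F] MvRatS F k m) := by
  intro i; simp

lemma diagW_mul {u v : Fin k ⊕ Fin m → F} {θ θ' : MvRatS F k m ≃ₐ[F] MvRatS F k m}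
    (hu : DiagW u θ) (hv : DiagW v θ') : DiagW (fun i => u i * v i) (θ * θ') := by
  intro i
  rw [AlgEquiv.mul_apply, hv i, map_mul, AlgEquiv.commutes, hu i, map_mul]
  ring

lemma diagW_inv {u : Fin k ⊕ Fin m → F} {θ : MvRatS F k m ≃ₐ[F] MvRatS F k m}
    (hu0 : ∀ i, u i ≠ 0) (hu : DiagW u θ) : DiagW (fun i => (u i)⁻¹) θ⁻¹ := by
  intro i
  have h1 : θ⁻¹ (θ (xvS i)) = xvS i := by
    rw [← AlgEquiv.mul_apply, inv_mul_cancel, AlgEquiv.one_apply]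
  rw [hu i, map_mul, AlgEquiv.commutes] at h1
  have hc0 : (algebraMap F (MvRatS F k m)) (u i) ≠ 0 :=
    (map_ne_zero_iff _ (algebraMap F (MvRatS F k m)).injective).mpr (hu0 i)
  rw [map_inv₀, eq_inv_mul_iff_mul_eq₀ hc0]
  exact h1

lemma diagW_pow {u : Fin k ⊕ Fin m → F} {θ : MvRatS F k m ≃ₐ[F] MvRatS F k m}
    (hu : DiagW u θ) (n : ℕ) : DiagW (fun i => u i ^ n) (θ ^ n) := by
  induction n with
  | zero => simpa using diagW_one
  | succ n ih =>
      have := diagW_mul ih hu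
      simpa [pow_succ] using this

lemma diagW_zpow {u : Fin k ⊕ Fin m → F} {θ : MvRatS F k m ≃ₐ[F] MvRatS F k m}
    (hu0 : ∀ i, u i ≠ 0) (hu : DiagW u θ) (n : ℤ) : DiagW (fun i => u i ^ n) (θ ^ n) := by
  cases n with
  | ofNat n => simpa [zpow_natCast] using diagW_pow hu n
  | negSucc n =>
      have := diagW_inv (fun i => pow_ne_zero _ (hu0 i)) (diagW_pow hu (n + 1))
      simpa [zpow_negSucc] using this

lemma diagW_listProd {ι : Type*} (l : List ι)
    (f : ι → (MvRatS F k m ≃ₐ[F] MvRatS F k m)) (w : ι → Fin k ⊕ Fin m → F)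
    (h : ∀ j ∈ l, DiagW (w j) (f j)) :
    DiagW (fun i => (l.map fun j => w j i).prod) (l.map f).prod := by
  induction l with
  | nil => simpa using diagW_one
  | cons a l ih =>
      have h1 : DiagW (w a) (f a) := h a List.mem_cons_self
      have h2 := ih (fun j hj => h j (List.mem_cons_of_mem a hj))
      have := diagW_mul h1 h2
      simpa using this

lemma diagW_congr {u v : Fin k ⊕ Fin m → F} {θ : MvRatS F k m ≃ₐ[F] MvRatS F k m}
    (huv : ∀ i, u i = v i) (hu : DiagW u θ) : DiagW v θ := by
  intro i; rw [← huv i]; exact hu i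

lemma diagW_tau {q : F} (τ : Fin m → (MvRatS F k m ≃ₐ[F] MvRatS F k m))
    (hτ : ∀ j, τ j (xvS (Sum.inr j)) = algebraMap F (MvRatS F k m) q * xvS (Sum.inr j))
    (hτfix : ∀ j i, i ≠ Sum.inr j → τ j (xvS i) = xvS i) (j : Fin m) :
    DiagW (fun i => if i = Sum.inr j then q else 1) (τ j) := by
  intro i
  by_cases h : i = Sum.inr j
  · subst h; simpa [if_pos] using hτ j
  · simp only [if_neg h, map_one, one_mul]
    exact hτfix j i h

lemma diagW_thetaPowS {q : F} (hq0 : q ≠ 0)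
    (τ : Fin m → (MvRatS F k m ≃ₐ[F] MvRatS F k m))
    (hτ : ∀ j, τ j (xvS (Sum.inr j)) = algebraMap F (MvRatS F k m) q * xvS (Sum.inr j))
    (hτfix : ∀ j i, i ≠ Sum.inr j → τ j (xvS i) = xvS i) (β : Fin m → ℤ) :
    DiagW (Sum.elim (fun _ => (1 : F)) fun j => q ^ β j) (thetaPowS τ β) := by
  have h0 := diagW_listProd Finset.univ.toList (fun j => τ j ^ β j)
      (fun j i => (if i = Sum.inr j then q else 1) ^ β j)
      (fun j _ => diagW_zpow
        (fun i => by split <;> simp [hq0]) (diagW_tau τ hτ hτfix j) (β j))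
  refine diagW_congr (fun i => ?_) h0
  rcases i with j' | j'
  · refine List.prod_eq_one fun x hx => ?_
    simp only [List.mem_map] at hx
    obtain ⟨j, _, rfl⟩ := hx
    simp
  · rw [Finset.prod_map_toList]
    rw [Finset.prod_eq_single j' (fun b _ hb => by
      simp only [if_neg
        (show (Sum.inr j' : Fin k ⊕ Fin m) ≠ Sum.inr b by simpa using (Ne.symm hb)),
        one_zpow]) (by simp)]
    simp

lemma algebraMap_C' (a : F) :
    algebraMap (MvPolynomial (Fin k ⊕ Fin m) F) (MvRatS F k m) (C a)
      = algebraMap F (MvRatS F k m) a := by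
  rw [IsScalarTower.algebraMap_apply F (MvPolynomial (Fin k ⊕ Fin m) F) (MvRatS F k m)]
  rfl

/-- Action of a diagonal automorphism on the image of a polynomial. -/
lemma diagW_algebraMap {u : Fin k ⊕ Fin m → F} {θ : MvRatS F k m ≃ₐ[F] MvRatS F k m}
    (hu : DiagW u θ) (p : MvPolynomial (Fin k ⊕ Fin m) F) :
    θ (algebraMap (MvPolynomial (Fin k ⊕ Fin m) F) (MvRatS F k m) p)
      = algebraMap (MvPolynomial (Fin k ⊕ Fin m) F) (MvRatS F k m)
          (aeval (fun i => C (u i) * X i) p) := by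
  have hext : (θ.toAlgHom.comp
        (IsScalarTower.toAlgHom F (MvPolynomial (Fin k ⊕ Fin m) F) (MvRatS F k m)))
      = ((IsScalarTower.toAlgHom F (MvPolynomial (Fin k ⊕ Fin m) F) (MvRatS F k m)).comp
        (aeval (fun i => C (u i) * X i))) := by
    apply MvPolynomial.algHom_ext
    intro i
    simp only [AlgHom.comp_apply, IsScalarTower.toAlgHom_apply, aeval_X, map_mul]
    rw [algebraMap_C']
    exact hu i
  exact DFunLike.congr_fun hext p

/-- Coefficient form of the rescaled polynomial. -/
lemma aeval_C_mul_X (u : Fin k ⊕ Fin m → F) (p : MvPolynomial (Fin k ⊕ Fin m) F) :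
    aeval (fun i => C (u i) * X i) p
      = ∑ e ∈ p.support, C (∏ i ∈ e.support, u i ^ e i) * monomial e (coeff e p) := by
  conv_lhs => rw [p.as_sum]
  rw [map_sum]
  refine Finset.sum_congr rfl fun e _ => ?_
  rw [aeval_monomial, monomial_eq]
  rw [Finsupp.prod]
  simp only [mul_pow, Finset.prod_mul_distrib]
  rw [Finsupp.prod, map_prod]
  simp only [map_pow, algebraMap_eq]
  ring

/-- The `z`-degree pairing `⟨γ, e⟩`. -/
def tw (γ : Fin m → ℤ) (e : (Fin k ⊕ Fin m) →₀ ℕ) : ℤ :=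
  ∑ i ∈ e.support, Sum.elim (fun _ => (0 : ℤ)) γ i * e i

lemma zpow_sum₀ {q : F} (hq0 : q ≠ 0) {ι : Type*} (s : Finset ι) (f : ι → ℤ) :
    q ^ (∑ i ∈ s, f i) = ∏ i ∈ s, q ^ f i := by
  classical
  induction s using Finset.induction with
  | empty => simp
  | insert _ _ hns ih =>
      rw [Finset.sum_insert hns, Finset.prod_insert hns, zpow_add₀ hq0, ih]

lemma prod_weight {q : F} (hq0 : q ≠ 0) (β : Fin m → ℤ) (e : (Fin k ⊕ Fin m) →₀ ℕ) :
    (∏ i ∈ e.support, (Sum.elim (fun _ => (1 : F)) fun j => q ^ β j) i ^ e i)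
      = q ^ tw β e := by
  rw [tw, zpow_sum₀ hq0]
  refine Finset.prod_congr rfl fun i _ => ?_
  rcases i with j | j
  · simp
  · simp only [Sum.elim_inr]
    rw [← zpow_natCast (q ^ β j), ← zpow_mul]

lemma tw_smul (ℓ : ℤ) (β : Fin m → ℤ) (e : (Fin k ⊕ Fin m) →₀ ℕ) :
    tw (ℓ • β) e = ℓ * tw β e := by
  rw [tw, tw, Finset.mul_sum]
  refine Finset.sum_congr rfl fun i _ => ?_
  rcases i with j | j <;> simp [mul_assoc]

/-- The key lemma: if `Θ^{ℓβ}(p) = c·p` then `Θ^β(p) = c̃·p`. -/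
lemma key {q : F} (hq0 : q ≠ 0) (hq : ∀ l : ℤ, l ≠ 0 → q ^ l ≠ 1)
    (τ : Fin m → (MvRatS F k m ≃ₐ[F] MvRatS F k m))
    (hτ : ∀ j, τ j (xvS (Sum.inr j)) = algebraMap F (MvRatS F k m) q * xvS (Sum.inr j))
    (hτfix : ∀ j i, i ≠ Sum.inr j → τ j (xvS i) = xvS i)
    (p : MvPolynomial (Fin k ⊕ Fin m) F) (hp0 : p ≠ 0)
    (β : Fin m → ℤ) (ℓ : ℤ) (hℓ : ℓ ≠ 0) (c : F) (hc : c ≠ 0)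
    (h : thetaPowS τ (ℓ • β) (algebraMap (MvPolynomial (Fin k ⊕ Fin m) F) (MvRatS F k m) p)
        = algebraMap F (MvRatS F k m) c *
          algebraMap (MvPolynomial (Fin k ⊕ Fin m) F) (MvRatS F k m) p) :
    ∃ ct : F, ct ≠ 0 ∧
      thetaPowS τ β (algebraMap (MvPolynomial (Fin k ⊕ Fin m) F) (MvRatS F k m) p)
        = algebraMap F (MvRatS F k m) ct *
          algebraMap (MvPolynomial (Fin k ⊕ Fin m) F) (MvRatS F k m) p := by
  have hinj : Function.Injective
      (algebraMap (MvPolynomial (Fin k ⊕ Fin m) F) (MvRatS F k m)) :=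
    IsFractionRing.injective _ _
  have hform : ∀ γ : Fin m → ℤ,
      thetaPowS τ γ (algebraMap (MvPolynomial (Fin k ⊕ Fin m) F) (MvRatS F k m) p)
        = algebraMap (MvPolynomial (Fin k ⊕ Fin m) F) (MvRatS F k m)
            (∑ e ∈ p.support, C (q ^ tw γ e) * monomial e (coeff e p)) := by
    intro γ
    rw [diagW_algebraMap (diagW_thetaPowS hq0 τ hτ hτfix γ) p, aeval_C_mul_X]
    congr 1
    exact Finset.sum_congr rfl fun e _ => by rw [prod_weight hq0]
  have heq : ∑ e ∈ p.support, C (q ^ tw (ℓ • β) e) * monomial e (coeff e p) = C c * p := by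
    apply hinj
    rw [← hform (ℓ • β), h, map_mul, algebraMap_C']
  have hmain : ∀ e ∈ p.support, q ^ (ℓ * tw β e) = c := by
    intro e he
    have h1 := congrArg (coeff e) heq
    rw [MvPolynomial.coeff_sum] at h1
    simp only [C_mul_monomial, coeff_monomial, coeff_C_mul] at h1
    rw [Finset.sum_ite_eq' p.support e (fun e' => q ^ tw (ℓ • β) e' * coeff e' p),
      if_pos he] at h1
    have hcf : coeff e p ≠ 0 := mem_support_iff.mp he
    have := mul_right_cancel₀ hcf h1
    rwa [tw_smul] at this
  obtain ⟨e0, he0⟩ := support_nonempty.mpr hp0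
  have hconst : ∀ e ∈ p.support, tw β e = tw β e0 := by
    intro e he
    by_contra hne
    have hone : q ^ (ℓ * tw β e - ℓ * tw β e0) = 1 := by
      rw [zpow_sub₀ hq0, hmain e he, hmain e0 he0, div_self hc]
    exact hq _ (by rw [← mul_sub]; exact mul_ne_zero hℓ (sub_ne_zero.mpr hne)) hone
  refine ⟨q ^ tw β e0, zpow_ne_zero _ hq0, ?_⟩
  rw [hform β, ← algebraMap_C', ← map_mul]
  congr 1
  conv_rhs => rw [p.as_sum, Finset.mul_sum]
  exact Finset.sum_congr rfl fun e he => by rw [hconst e he]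

end Stmt5Aux
end

set_option maxHeartbeats 1000000 in
/-- **`G^τ/G^τ_p` is free abelian.** Let `p ∈ F[x]` be nonconstant. Then the
quotient of the free abelian group `G^τ = ⟨τ_{q,z₁},…,τ_{q,z_m}⟩` (identified with `ℤ^m`
via exponent vectors) by the isotropy group `G^τ_p` of `p` is free abelian; equivalently,
if `τ₀ ∈ G^τ` and `τ₀^ℓ(p) = c·p` for some nonzero `ℓ ∈ ℤ` and nonzero `c ∈ F`, then
`τ₀(p) = c̃·p` for some nonzero `c̃ ∈ F`. -/
theorem stmt_5 {F : Type*} [Field F] [CharZero F] {k m : ℕ}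
    (q : F) (hq0 : q ≠ 0) (hq : ∀ l : ℤ, l ≠ 0 → q ^ l ≠ 1)
    (σ : Fin k → (MvRatS F k m ≃ₐ[F] MvRatS F k m))
    (hσ : ∀ j, σ j (xvS (Sum.inl j)) = xvS (Sum.inl j) + 1)
    (hσfix : ∀ j i, i ≠ Sum.inl j → σ j (xvS i) = xvS i)
    (τ : Fin m → (MvRatS F k m ≃ₐ[F] MvRatS F k m))
    (hτ : ∀ j, τ j (xvS (Sum.inr j)) = algebraMap F (MvRatS F k m) q * xvS (Sum.inr j))
    (hτfix : ∀ j i, i ≠ Sum.inr j → τ j (xvS i) = xvS i)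
    (hadd : ∀ α β : Fin m → ℤ, thetaPowS τ (α + β) = thetaPowS τ α * thetaPowS τ β)
    (h0 : thetaPowS τ (0 : Fin m → ℤ) = 1)
    (p : MvPolynomial (Fin k ⊕ Fin m) F) (hp : 0 < p.totalDegree) :
    Module.Free ℤ ((Fin m → ℤ) ⧸ isotropyZ (thetaPowS τ) hadd h0
      (algebraMap (MvPolynomial (Fin k ⊕ Fin m) F) (MvRatS F k m) p)) ∧
    (∀ (β : Fin m → ℤ) (ℓ : ℤ), ℓ ≠ 0 → ∀ c : F, c ≠ 0 →
      thetaPowS τ (ℓ • β) (algebraMap (MvPolynomial (Fin k ⊕ Fin m) F) (MvRatS F k m) p) =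
        algebraMap F (MvRatS F k m) c *
          algebraMap (MvPolynomial (Fin k ⊕ Fin m) F) (MvRatS F k m) p →
      ∃ ct : F, ct ≠ 0 ∧
        thetaPowS τ β (algebraMap (MvPolynomial (Fin k ⊕ Fin m) F) (MvRatS F k m) p) =
          algebraMap F (MvRatS F k m) ct *
            algebraMap (MvPolynomial (Fin k ⊕ Fin m) F) (MvRatS F k m) p) := by

  have hp0 : p ≠ 0 := fun h => by simp [h] at hp
  have key2 : ∀ (β : Fin m → ℤ) (ℓ : ℤ), ℓ ≠ 0 → ∀ c : F, c ≠ 0 →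
      thetaPowS τ (ℓ • β) (algebraMap (MvPolynomial (Fin k ⊕ Fin m) F) (MvRatS F k m) p) =
        algebraMap F (MvRatS F k m) c *
          algebraMap (MvPolynomial (Fin k ⊕ Fin m) F) (MvRatS F k m) p →
      ∃ ct : F, ct ≠ 0 ∧
        thetaPowS τ β (algebraMap (MvPolynomial (Fin k ⊕ Fin m) F) (MvRatS F k m) p) =
          algebraMap F (MvRatS F k m) ct *
            algebraMap (MvPolynomial (Fin k ⊕ Fin m) F) (MvRatS F k m) p :=
    fun β ℓ hℓ c hc h => Stmt5Aux.key hq0 hq τ hτ hτfix p hp0 β ℓ hℓ c hc h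
  refine ⟨?_, key2⟩
  set H := isotropyZ (thetaPowS τ) hadd h0
      (algebraMap (MvPolynomial (Fin k ⊕ Fin m) F) (MvRatS F k m) p) with hH
  haveI : Module.Finite ℤ ((Fin m → ℤ) ⧸ H) :=
    Module.Finite.of_surjective (QuotientAddGroup.mk' H).toIntLinearMap
      (QuotientAddGroup.mk'_surjective H)
  haveI : NoZeroSMulDivisors ℤ ((Fin m → ℤ) ⧸ H) := by
    constructor
    intro ℓ x hx
    by_cases hℓ : ℓ = 0
    · exact Or.inl hℓ
    · refine Or.inr ?_
      obtain ⟨β, rfl⟩ := QuotientAddGroup.mk'_surjective H x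
      have hx' : (QuotientAddGroup.mk' H) (ℓ • β) = 0 := by
        rw [map_zsmul]; exact hx
      have hmem : ℓ • β ∈ H := (QuotientAddGroup.eq_zero_iff _).mp hx'
      obtain ⟨c, hc, hcp⟩ := hmem
      obtain ⟨ct, hct, hctp⟩ := key2 β ℓ hℓ c hc hcp
      exact (QuotientAddGroup.eq_zero_iff _).mpr ⟨ct, hct, hctp⟩
  exact Module.free_of_finite_type_torsion_free'
end

section
/- Let p ∈ F[x] be a nonconstant polynomial and let G = G^σ ⊕ G^τ. Then G_p = G^σ_p ⊕ G^τ_p; precisely, if θ = σ₀·τ₀ ∈ G_p with σ₀ ∈ G^σ and τ₀ ∈ G^τ, say θ(p) = c·p with c ∈ F nonzero, then σ₀(p) = p and τ₀(p) = c·p. Consequently G/G_p ≅ G^σ/G^σ_p ⊕ G^τ/G^τ_p is a free abelian group. -/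
namespace Stmt6Aux
open MvPolynomial
noncomputable section
set_option linter.unusedSectionVars false
set_option maxHeartbeats 1000000
set_option synthInstance.maxHeartbeats 400000

variable {F : Type*} [Field F] [CharZero F] {k m : ℕ}

/-- Shift substitution `X j ↦ X j + γ j` as an algebra hom. -/
def shiftHom {ι : Type*} (γ : ι → F) : MvPolynomial ι F →ₐ[F] MvPolynomial ι F :=
  aeval (fun j => X j + C (γ j))

lemma eval_shiftHom {ι : Type*} (γ b : ι → F) (r : MvPolynomial ι F) :
    eval b (shiftHom γ r) = eval (fun j => b j + γ j) r := by
  induction r using MvPolynomial.induction_on with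
  | C a => simp [shiftHom]
  | add p q hp hq => simp [map_add, hp, hq]
  | mul_X p i hp =>
      rw [map_mul, map_mul, map_mul, hp]
      congr 1
      simp [shiftHom]

/-- Restriction to the line `t ↦ b + t·δ` as a univariate polynomial. -/
def lineP {ι : Type*} (b δ : ι → F) : MvPolynomial ι F →ₐ[F] Polynomial F :=
  aeval (fun j => Polynomial.C (b j) + Polynomial.C (δ j) * Polynomial.X)

lemma eval_lineP {ι : Type*} (b δ : ι → F) (r : MvPolynomial ι F) (t : F) :
    (lineP b δ r).eval t = eval (fun j => b j + δ j * t) r := by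
  induction r using MvPolynomial.induction_on with
  | C a => simp [lineP]
  | add p q hp hq => simp [map_add, hp, hq]
  | mul_X p i hp =>
      rw [map_mul, map_mul, Polynomial.eval_mul, hp]
      congr 1
      simp [lineP]

lemma exists_eval_ne {ι : Type*} {r : MvPolynomial ι F} (hr : r ≠ 0) :
    ∃ b : ι → F, eval b r ≠ 0 := by
  by_contra h
  push_neg at h
  exact hr (MvPolynomial.funext (q := 0) (fun x => by simp [h x]))

lemma lineP_ne_zero {ι : Type*} {r : MvPolynomial ι F} {b : ι → F} (δ : ι → F)
    (hb : eval b r ≠ 0) : lineP b δ r ≠ 0 := by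
  intro h0
  apply hb
  have := eval_lineP b δ r 0
  rw [h0] at this
  simpa using this.symm


lemma shift_scalar_eq_one {ι : Type*} (γ : ι → F) {r : MvPolynomial ι F} (hr : r ≠ 0)
    {e : F} (h : shiftHom γ r = C e * r) : e = 1 := by
  obtain ⟨b, hb⟩ := exists_eval_ne hr
  set g : Polynomial F := lineP b γ r with hg
  have hgne : g ≠ 0 := lineP_ne_zero γ hb
  have hcomp : g.comp (Polynomial.X + 1) = Polynomial.C e * g := by
    apply Polynomial.funext
    intro t
    rw [Polynomial.eval_comp]
    simp only [Polynomial.eval_add, Polynomial.eval_X, Polynomial.eval_one,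
      Polynomial.eval_mul, Polynomial.eval_C, hg, eval_lineP]
    have := congrArg (eval (fun j => b j + γ j * t)) h
    rw [eval_shiftHom] at this
    simp only [map_mul, eval_C] at this
    rw [show (fun j => b j + γ j * (t + 1)) = (fun j => (b j + γ j * t) + γ j) by
      funext j; ring]
    exact this
  have hd : (Polynomial.X + 1 : Polynomial F).natDegree = 1 := by
    simpa using Polynomial.natDegree_X_add_C (1 : F)
  have hlc := Polynomial.leadingCoeff_comp (p := g) (q := Polynomial.X + 1) (by rw [hd]; norm_num)
  rw [hcomp] at hlc
  have hlc1 : (Polynomial.X + 1 : Polynomial F).leadingCoeff = 1 := by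
    simpa using Polynomial.leadingCoeff_X_add_C (1 : F)
  rw [hlc1, one_pow, mul_one, Polynomial.leadingCoeff_mul, Polynomial.leadingCoeff_C] at hlc
  have := Polynomial.leadingCoeff_ne_zero.mpr hgne
  exact mul_right_cancel₀ this (by rw [one_mul, hlc])


lemma shift_periodic {ι : Type*} {γ : ι → F} {s : F} (hs : s ≠ 0) {r : MvPolynomial ι F}
    (h : shiftHom (fun j => s * γ j) r = r) : shiftHom γ r = r := by
  apply MvPolynomial.funext
  intro b
  rw [eval_shiftHom]
  set g : Polynomial F := lineP b γ r with hg
  have h1 : eval (fun j => b j + γ j) r = g.eval 1 := by rw [hg, eval_lineP]; simp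
  have h0 : eval b r = g.eval 0 := by rw [hg, eval_lineP]; simp
  rw [h1, h0]
  have hper : ∀ t : F, g.eval (t + s) = g.eval t := by
    intro t
    rw [hg, eval_lineP, eval_lineP]
    have := eval_shiftHom (fun j => s * γ j) (fun j => b j + γ j * t) r
    rw [h] at this
    rw [this]
    have : (fun j => b j + γ j * (t + s)) = fun j => b j + γ j * t + s * γ j := by
      funext j; ring
    rw [this]
  have hconst : ∀ k : ℕ, g.eval ((k : F) * s) = g.eval 0 := by
    intro k
    induction k with
    | zero => simp
    | succ n ih => rw [show ((n+1 : ℕ) : F) * s = (n : F) * s + s by push_cast; ring, hper, ih]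
  have hzero : g - Polynomial.C (g.eval 0) = 0 := by
    apply Polynomial.eq_zero_of_infinite_isRoot
    apply Set.Infinite.mono (s := Set.range (fun k : ℕ => (k : F) * s))
    · rintro x ⟨k, rfl⟩
      simp [Polynomial.IsRoot, hconst k]
    · apply Set.infinite_range_of_injective
      intro a b hab
      have : (a : F) = b := mul_right_cancel₀ hs hab
      exact_mod_cast this
  have hgc : g = Polynomial.C (g.eval 0) := by linear_combination (norm := ring_nf) hzero
  rw [hgc]
  simp


/-- `y`-shift on the combined ring. -/
def SaH (α : Fin k → ℤ) :
    MvPolynomial (Fin k ⊕ Fin m) F →ₐ[F] MvPolynomial (Fin k ⊕ Fin m) F :=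
  aeval (Sum.elim (fun j => X (Sum.inl j) + C ((α j : F))) (fun j => X (Sum.inr j)))

/-- `z`-scaling on the combined ring. -/
def TbH (q : F) (β : Fin m → ℤ) :
    MvPolynomial (Fin k ⊕ Fin m) F →ₐ[F] MvPolynomial (Fin k ⊕ Fin m) F :=
  aeval (Sum.elim (fun j => X (Sum.inl j)) (fun j => C (q ^ β j) * X (Sum.inr j)))

/-- The iso `F[y,z] ≃ (F[y])[z]`. -/
def PhiA (F : Type*) [Field F] (k m : ℕ) :
    MvPolynomial (Fin k ⊕ Fin m) F ≃ₐ[F] MvPolynomial (Fin m) (MvPolynomial (Fin k) F) :=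
  (renameEquiv F (Equiv.sumComm (Fin k) (Fin m))).trans (sumAlgEquiv F (Fin m) (Fin k))

@[simp] lemma PhiA_Xl (j : Fin k) :
    PhiA F k m (X (Sum.inl j)) = C (X j) := by
  simp [PhiA, sumAlgEquiv_X_inr]

@[simp] lemma PhiA_Xr (j : Fin m) :
    PhiA F k m (X (Sum.inr j)) = X j := by
  simp [PhiA, sumAlgEquiv_X_inl]

@[simp] lemma PhiA_C (a : F) : PhiA F k m (C a) = C (C a) := by
  have h1 : (C a : MvPolynomial (Fin k ⊕ Fin m) F) = algebraMap F _ a := rfl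
  have h2 : (C (C a) : MvPolynomial (Fin m) (MvPolynomial (Fin k) F)) = algebraMap F _ a := by
    rw [IsScalarTower.algebraMap_eq F (MvPolynomial (Fin k) F)
      (MvPolynomial (Fin m) (MvPolynomial (Fin k) F)), RingHom.comp_apply,
      algebraMap_eq, algebraMap_eq]
  rw [h1, h2, AlgEquiv.commutes]

lemma PhiA_Sa (α : Fin k → ℤ) (p : MvPolynomial (Fin k ⊕ Fin m) F) :
    PhiA F k m (SaH α p) =
      map (shiftHom (fun j => (α j : F)) : _ →ₐ[F] _).toRingHom (PhiA F k m p) := by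
  have : (PhiA F k m).toAlgHom.comp (SaH α) =
      (mapAlgHom (shiftHom (fun j => (α j : F)))).comp (PhiA F k m).toAlgHom := by
    apply algHom_ext
    rintro (j | j) <;>
      simp [SaH, shiftHom, map_add]
  exact congrFun (congrArg (fun (f : _ →ₐ[F] _) => ⇑f) this) p

def scaleZ (q : F) (β : Fin m → ℤ) :
    MvPolynomial (Fin m) (MvPolynomial (Fin k) F) →ₐ[MvPolynomial (Fin k) F]
      MvPolynomial (Fin m) (MvPolynomial (Fin k) F) :=
  aeval (fun j => C (C (q ^ β j)) * X j)

lemma PhiA_Tb (q : F) (β : Fin m → ℤ) (p : MvPolynomial (Fin k ⊕ Fin m) F) :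
    PhiA F k m (TbH q β p) = scaleZ q β (PhiA F k m p) := by
  have : (PhiA F k m).toAlgHom.comp (TbH q β) =
      ((scaleZ (k := k) q β).restrictScalars F).comp (PhiA F k m).toAlgHom := by
    apply algHom_ext
    rintro (j | j) <;>
      simp [TbH, scaleZ, algebraMap_eq]
  exact congrFun (congrArg (fun (f : _ →ₐ[F] _) => ⇑f) this) p

/-- weight of the exponent vector `e` w.r.t. `β` -/
def wgt (β : Fin m → ℤ) (e : Fin m →₀ ℕ) : ℤ := ∑ j ∈ e.support, β j * (e j : ℤ)

lemma zpow_sum {q : F} (hq0 : q ≠ 0) (s : Finset (Fin m)) (f : Fin m → ℤ) :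
    q ^ (∑ j ∈ s, f j) = ∏ j ∈ s, q ^ f j := by
  classical
  induction s using Finset.induction with
  | empty => simp
  | insert a s' hx ih => rw [Finset.sum_insert hx, Finset.prod_insert hx,
      zpow_add₀ hq0, ih]

lemma scaleZ_monomial {q : F} (hq0 : q ≠ 0) (β : Fin m → ℤ) (e : Fin m →₀ ℕ)
    (b : MvPolynomial (Fin k) F) :
    scaleZ q β (monomial e b) = C (C (q ^ wgt β e)) * monomial e b := by
  rw [show scaleZ (k := k) q β ((monomial e) b) = (aeval fun j => C (C (q ^ β j)) * X j) ((monomial e) b) from rfl,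
    aeval_monomial, Finsupp.prod]
  have hsplit : ∀ j ∈ e.support, (C (C (q ^ β j)) * X j : MvPolynomial (Fin m) (MvPolynomial (Fin k) F)) ^ e j
      = C (C (q ^ (β j * (e j : ℤ)))) * X j ^ e j := by
    intro j _
    rw [mul_pow, ← map_pow, ← map_pow, ← zpow_natCast (q ^ β j), ← zpow_mul]
  rw [Finset.prod_congr rfl hsplit, Finset.prod_mul_distrib, ← map_prod, ← map_prod,
    ← zpow_sum hq0]
  have hmon : (monomial e (1 : MvPolynomial (Fin k) F)) = ∏ j ∈ e.support, (X j) ^ e j := by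
    rw [monomial_eq]; simp [Finsupp.prod]
  rw [algebraMap_eq, ← hmon, wgt]
  rw [show (monomial e) b = C b * monomial e 1 by rw [monomial_eq, monomial_eq]; simp [Finsupp.prod]]
  ring

lemma coeff_scaleZ {q : F} (hq0 : q ≠ 0) (β : Fin m → ℤ)
    (r : MvPolynomial (Fin m) (MvPolynomial (Fin k) F)) (e : Fin m →₀ ℕ) :
    coeff e (scaleZ q β r) = C (q ^ wgt β e) * coeff e r := by
  conv_lhs => rw [r.as_sum, map_sum]
  rw [coeff_sum]
  have : ∀ d ∈ r.support, coeff e (scaleZ q β ((monomial d) (coeff d r)))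
      = C (q ^ wgt β d) * (if d = e then coeff d r else 0) := by
    intro d _
    rw [scaleZ_monomial hq0, coeff_C_mul, coeff_monomial]
  rw [Finset.sum_congr rfl this, Finset.sum_eq_single e]
  · simp
  · intro d _ hne; simp [hne]
  · intro he; simp [MvPolynomial.notMem_support_iff.mp he]



lemma zpow_inj {q : F} (hq0 : q ≠ 0) (hq : ∀ l : ℤ, l ≠ 0 → q ^ l ≠ 1)
    {a b : ℤ} (h : q ^ a = q ^ b) : a = b := by
  by_contra hne
  apply hq (a - b) (sub_ne_zero.mpr hne)
  rw [zpow_sub₀ hq0, h, div_self (zpow_ne_zero _ hq0)]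

lemma slice_eq {q : F} (hq0 : q ≠ 0)
    (α : Fin k → ℤ) (β : Fin m → ℤ) {c : F}
    {p : MvPolynomial (Fin k ⊕ Fin m) F}
    (h : SaH α (TbH q β p) = C c * p) (e : Fin m →₀ ℕ) :
    C (q ^ wgt β e) * shiftHom (fun j => (α j : F)) (coeff e (PhiA F k m p))
      = C c * coeff e (PhiA F k m p) := by
  have hPhi := congrArg (PhiA F k m) h
  rw [PhiA_Sa, PhiA_Tb, map_mul, PhiA_C] at hPhi
  have hco := congrArg (coeff e) hPhi
  rw [coeff_map, coeff_C_mul, coeff_scaleZ hq0] at hco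
  have hCa : ∀ (a : F) (x : MvPolynomial (Fin k) F),
      (shiftHom (fun j => (α j : F))) (C a * x) = C a * (shiftHom (fun j => (α j : F))) x := by
    intro a x
    rw [map_mul]
    congr 1
    rw [← algebraMap_eq, AlgHom.commutes]
  simp only [AlgHom.toRingHom_eq_coe, RingHom.coe_coe] at hco
  rw [hCa] at hco
  exact hco

lemma slice_conc {q : F} (hq0 : q ≠ 0)
    (α : Fin k → ℤ) (β : Fin m → ℤ) {c : F}
    {p : MvPolynomial (Fin k ⊕ Fin m) F}
    (h : SaH α (TbH q β p) = C c * p) (e : Fin m →₀ ℕ)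
    (hne : coeff e (PhiA F k m p) ≠ 0) :
    shiftHom (fun j => (α j : F)) (coeff e (PhiA F k m p)) = coeff e (PhiA F k m p)
      ∧ c = q ^ wgt β e := by
  have hs := slice_eq hq0 α β h e
  have hqe : (q ^ wgt β e) ≠ 0 := zpow_ne_zero _ hq0
  have h2 : shiftHom (fun j => (α j : F)) (coeff e (PhiA F k m p))
      = C ((q ^ wgt β e)⁻¹ * c) * coeff e (PhiA F k m p) := by
    rw [map_mul, mul_assoc, ← hs, ← mul_assoc, ← map_mul, inv_mul_cancel₀ hqe, map_one, one_mul]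
  have he1 : (q ^ wgt β e)⁻¹ * c = 1 := shift_scalar_eq_one _ hne h2
  have hc' : c = q ^ wgt β e := by
    field_simp at he1
    exact he1
  refine ⟨?_, hc'⟩
  rw [h2, he1, map_one, one_mul]

lemma shiftHom_C_mul {ι : Type*} (γ : ι → F) (a : F) (x : MvPolynomial ι F) :
    shiftHom γ (C a * x) = C a * shiftHom γ x := by
  rw [map_mul]
  congr 1
  rw [← algebraMap_eq, AlgHom.commutes]

lemma core {q : F} (hq0 : q ≠ 0)
    (α : Fin k → ℤ) (β : Fin m → ℤ) {c : F}
    {p : MvPolynomial (Fin k ⊕ Fin m) F}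
    (h : SaH α (TbH q β p) = C c * p) :
    SaH α p = p ∧ TbH q β p = C c * p := by
  constructor
  · apply (PhiA F k m).injective
    rw [PhiA_Sa]
    apply MvPolynomial.ext
    intro e
    rw [coeff_map]
    by_cases hne : coeff e (PhiA F k m p) = 0
    · simp [hne]
    · simpa using (slice_conc hq0 α β h e hne).1
  · apply (PhiA F k m).injective
    rw [PhiA_Tb, map_mul, PhiA_C]
    apply MvPolynomial.ext
    intro e
    rw [coeff_scaleZ hq0, coeff_C_mul]
    by_cases hne : coeff e (PhiA F k m p) = 0
    · rw [hne, mul_zero, mul_zero]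
    · rw [(slice_conc hq0 α β h e hne).2]

lemma wgt_smul (n : ℤ) (β : Fin m → ℤ) (e : Fin m →₀ ℕ) :
    wgt (n • β) e = n * wgt β e := by
  rw [wgt, wgt, Finset.mul_sum]
  refine Finset.sum_congr rfl fun j _ => ?_
  simp [mul_assoc]

lemma torsion {q : F} (hq0 : q ≠ 0) (hq : ∀ l : ℤ, l ≠ 0 → q ^ l ≠ 1)
    {n : ℤ} (hn : n ≠ 0) (α : Fin k → ℤ) (β : Fin m → ℤ) {c : F}
    {p : MvPolynomial (Fin k ⊕ Fin m) F}
    (h : SaH (n • α) (TbH q (n • β) p) = C c * p) :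
    ∃ c' : F, c' ≠ 0 ∧ SaH α (TbH q β p) = C c' * p := by
  by_cases hp : p = 0
  · exact ⟨1, one_ne_zero, by simp [hp]⟩
  have hΦ : PhiA F k m p ≠ 0 := fun h0 => hp ((PhiA F k m).injective (by simpa using h0))
  obtain ⟨e₀, he₀⟩ := MvPolynomial.ne_zero_iff.mp hΦ
  refine ⟨q ^ wgt β e₀, zpow_ne_zero _ hq0, ?_⟩
  have hfun : (fun j => (((n • α) j : ℤ) : F)) = fun j => (n : F) * ((α j : ℤ) : F) := by
    funext j
    simp only [Pi.smul_apply, smul_eq_mul]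
    push_cast
    ring
  have key : ∀ e : Fin m →₀ ℕ, coeff e (PhiA F k m p) ≠ 0 →
      shiftHom (fun j => ((α j : ℤ) : F)) (coeff e (PhiA F k m p)) = coeff e (PhiA F k m p)
        ∧ wgt β e = wgt β e₀ := by
    intro e hne
    obtain ⟨hsh, hce⟩ := slice_conc hq0 (n • α) (n • β) h e hne
    obtain ⟨_, hce₀⟩ := slice_conc hq0 (n • α) (n • β) h e₀ he₀
    constructor
    · apply shift_periodic (s := (n : F)) (by exact_mod_cast hn)
      rw [← hfun]
      exact hsh
    · have : q ^ wgt (n • β) e = q ^ wgt (n • β) e₀ := by rw [← hce, ← hce₀]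
      have h2 := zpow_inj hq0 hq this
      rw [wgt_smul, wgt_smul] at h2
      exact mul_left_cancel₀ hn h2
  apply (PhiA F k m).injective
  rw [PhiA_Sa, PhiA_Tb, map_mul, PhiA_C]
  apply MvPolynomial.ext
  intro e
  rw [coeff_map, coeff_C_mul]
  simp only [AlgHom.toRingHom_eq_coe, RingHom.coe_coe]
  rw [coeff_scaleZ hq0, shiftHom_C_mul]
  by_cases hne : coeff e (PhiA F k m p) = 0
  · rw [hne, map_zero, mul_zero, mul_zero]
  · obtain ⟨hsh, hwe⟩ := key e hne
    rw [hsh, hwe]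



variable {L : Type*} [Field L] [Algebra F L]

lemma aut_inv_apply (θ : L ≃ₐ[F] L) (x : L) : θ⁻¹ x = θ.symm x := rfl

lemma zpow_fix (θ : L ≃ₐ[F] L) (x : L) (hx : θ x = x) (a : ℤ) : (θ ^ a) x = x := by
  have hnat : ∀ n : ℕ, (θ ^ n) x = x := by
    intro n
    induction n with
    | zero => simp
    | succ n ih => rw [pow_succ, AlgEquiv.mul_apply, hx, ih]
  rcases a with n | n
  · rw [Int.ofNat_eq_coe, zpow_natCast]; exact hnat n
  · rw [zpow_negSucc, aut_inv_apply, AlgEquiv.symm_apply_eq, hnat]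

lemma zpow_shift (θ : L ≃ₐ[F] L) (x : L) (hx : θ x = x + 1) (a : ℤ) :
    (θ ^ a) x = x + (a : L) := by
  have hnat : ∀ n : ℕ, (θ ^ n) x = x + (n : L) := by
    intro n
    induction n with
    | zero => simp
    | succ n ih => rw [pow_succ, AlgEquiv.mul_apply, hx, map_add, ih, map_one]; push_cast; ring
  rcases a with n | n
  · rw [Int.ofNat_eq_coe, zpow_natCast, hnat]; norm_num
  · rw [zpow_negSucc, aut_inv_apply, AlgEquiv.symm_apply_eq, map_add, hnat (n+1)]
    rw [show ((Int.negSucc n : ℤ) : L) = -((n : L) + 1) by push_cast [Int.negSucc_eq]; ring]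
    have : ((θ ^ (n+1) : L ≃ₐ[F] L)) (-((n:L)+1)) = -((n:L)+1) := by
      rw [map_neg, map_add, map_one, map_natCast]
    rw [this]; push_cast; ring

lemma zpow_scale (θ : L ≃ₐ[F] L) (x : L) {u : F} (hu : u ≠ 0)
    (hx : θ x = algebraMap F L u * x) (a : ℤ) :
    (θ ^ a) x = algebraMap F L (u ^ a) * x := by
  have hnat : ∀ n : ℕ, (θ ^ n) x = algebraMap F L (u ^ (n : ℤ)) * x := by
    intro n
    induction n with
    | zero => simp
    | succ n ih =>
        rw [pow_succ, AlgEquiv.mul_apply, hx, map_mul, AlgEquiv.commutes, ih, ← mul_assoc,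
          ← map_mul]
        congr 1
        rw [show ((n+1:ℕ):ℤ) = (n:ℤ)+1 by push_cast; ring, zpow_add₀ hu, zpow_one]
        ring
  rcases a with n | n
  · rw [Int.ofNat_eq_coe, zpow_natCast, hnat]
  · rw [zpow_negSucc, aut_inv_apply, AlgEquiv.symm_apply_eq]
    rw [map_mul, AlgEquiv.commutes, hnat (n+1)]
    rw [← mul_assoc, ← map_mul, ← zpow_add₀ hu]
    have h0 : Int.negSucc n + ((n+1:ℕ) : ℤ) = 0 := by
      rw [Int.negSucc_eq]; push_cast; ring
    rw [h0]
    simp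


lemma list_prod_fix {ι : Type*} (l : List ι) (θs : ι → (L ≃ₐ[F] L)) (x : L)
    (hfix : ∀ i ∈ l, θs i x = x) : ((l.map θs).prod) x = x := by
  induction l with
  | nil => simp
  | cons hd tl ih =>
      rw [List.map_cons, List.prod_cons, AlgEquiv.mul_apply,
        ih (fun i hi => hfix i (List.mem_cons_of_mem _ hi)), hfix hd (List.mem_cons_self)]

lemma list_prod_shift {ι : Type*} [DecidableEq ι] (l : List ι) (θs : ι → (L ≃ₐ[F] L))
    (α : ι → ℤ) (x : L) (j : ι)
    (hj : θs j x = x + 1) (hother : ∀ i, i ≠ j → θs i x = x) :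
    ((l.map fun i => θs i ^ α i).prod) x = x + (((l.count j : ℤ) * α j : ℤ) : L) := by
  induction l with
  | nil => simp
  | cons hd tl ih =>
      rw [List.map_cons, List.prod_cons, AlgEquiv.mul_apply, ih]
      by_cases h : hd = j
      · subst h
        rw [map_add, zpow_shift _ _ hj, map_intCast]
        rw [List.count_cons_self]
        push_cast
        ring
      · rw [map_add, zpow_fix _ _ (hother hd h), map_intCast,
          List.count_cons_of_ne h]

lemma list_prod_scale {ι : Type*} [DecidableEq ι] (l : List ι) (θs : ι → (L ≃ₐ[F] L))
    (α : ι → ℤ) (x : L) (j : ι) {u : F} (hu : u ≠ 0)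
    (hj : θs j x = algebraMap F L u * x) (hother : ∀ i, i ≠ j → θs i x = x) :
    ((l.map fun i => θs i ^ α i).prod) x
      = algebraMap F L (u ^ ((l.count j : ℤ) * α j)) * x := by
  induction l with
  | nil => simp
  | cons hd tl ih =>
      rw [List.map_cons, List.prod_cons, AlgEquiv.mul_apply, ih]
      by_cases h : hd = j
      · subst h
        rw [map_mul, AlgEquiv.commutes, zpow_scale _ _ hu hj, ← mul_assoc, ← map_mul,
          ← zpow_add₀ hu, List.count_cons_self]
        congr 2
        push_cast
        ring
      · rw [map_mul, AlgEquiv.commutes, zpow_fix _ _ (hother hd h),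
          List.count_cons_of_ne h]

lemma thetaPow_eval {ι : Type*} [DecidableEq ι] [Fintype ι] (θs : ι → (L ≃ₐ[F] L))
    (α : ι → ℤ) (x : L) (j : ι)
    (hj : θs j x = x + 1) (hother : ∀ i, i ≠ j → θs i x = x) :
    thetaPowS θs α x = x + ((α j : ℤ) : L) := by
  rw [thetaPowS, list_prod_shift _ _ _ _ j hj hother,
    List.count_eq_one_of_mem (Finset.nodup_toList _) (Finset.mem_toList.mpr (Finset.mem_univ j))]
  push_cast
  ring

lemma thetaPow_eval_scale {ι : Type*} [DecidableEq ι] [Fintype ι] (θs : ι → (L ≃ₐ[F] L))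
    (α : ι → ℤ) (x : L) (j : ι) {u : F} (hu : u ≠ 0)
    (hj : θs j x = algebraMap F L u * x) (hother : ∀ i, i ≠ j → θs i x = x) :
    thetaPowS θs α x = algebraMap F L (u ^ α j) * x := by
  rw [thetaPowS, list_prod_scale _ _ _ _ j hu hj hother,
    List.count_eq_one_of_mem (Finset.nodup_toList _) (Finset.mem_toList.mpr (Finset.mem_univ j))]
  norm_num

lemma thetaPow_fix {ι : Type*} [Fintype ι] (θs : ι → (L ≃ₐ[F] L)) (α : ι → ℤ) (x : L)
    (hfix : ∀ i, θs i x = x) : thetaPowS θs α x = x := by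
  rw [thetaPowS]
  exact list_prod_fix _ _ _ (fun i _ => zpow_fix _ _ (hfix i) _)


lemma sigma_alg (σ : Fin k → (MvRatS F k m ≃ₐ[F] MvRatS F k m))
    (hσ : ∀ j, σ j (xvS (Sum.inl j)) = xvS (Sum.inl j) + 1)
    (hσfix : ∀ j i, i ≠ Sum.inl j → σ j (xvS i) = xvS i)
    (α : Fin k → ℤ) (r : MvPolynomial (Fin k ⊕ Fin m) F) :
    thetaPowS σ α (algebraMap (MvPolynomial (Fin k ⊕ Fin m) F) (MvRatS F k m) r)
      = algebraMap (MvPolynomial (Fin k ⊕ Fin m) F) (MvRatS F k m) (SaH α r) := by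
  have heq : ((thetaPowS σ α).toAlgHom.comp
        (IsScalarTower.toAlgHom F (MvPolynomial (Fin k ⊕ Fin m) F) (MvRatS F k m)))
      = (IsScalarTower.toAlgHom F (MvPolynomial (Fin k ⊕ Fin m) F) (MvRatS F k m)).comp
        (SaH α) := by
    apply algHom_ext
    rintro (j | j)
    · have h1 : thetaPowS σ α (xvS (Sum.inl j)) = xvS (Sum.inl j) + ((α j : ℤ) : MvRatS F k m) :=
        thetaPow_eval σ α (xvS (Sum.inl j)) j (hσ j)
          (fun i hi => hσfix i (Sum.inl j) (by simp [Ne, Sum.inl.injEq]; exact fun h => hi h.symm))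
      simp only [AlgHom.comp_apply, IsScalarTower.coe_toAlgHom', AlgEquiv.toAlgHom_eq_coe,
        AlgHom.coe_coe, AlgEquiv.coe_toAlgHom]
      rw [show algebraMap (MvPolynomial (Fin k ⊕ Fin m) F) (MvRatS F k m) (X (Sum.inl j))
        = xvS (Sum.inl j) from rfl, h1]
      rw [SaH, aeval_X, Sum.elim_inl, map_add,
        show algebraMap (MvPolynomial (Fin k ⊕ Fin m) F) (MvRatS F k m) (C ((α j : ℤ) : F))
          = algebraMap F (MvRatS F k m) ((α j : ℤ) : F) from
          (IsScalarTower.algebraMap_apply F _ _ _).symm, map_intCast]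
      rfl
    · have h1 : thetaPowS σ α (xvS (Sum.inr j)) = xvS (Sum.inr j) :=
        thetaPow_fix σ α _ (fun i => hσfix i (Sum.inr j) (by simp))
      simp only [AlgHom.comp_apply, IsScalarTower.coe_toAlgHom', AlgEquiv.toAlgHom_eq_coe,
        AlgHom.coe_coe, AlgEquiv.coe_toAlgHom]
      rw [show algebraMap (MvPolynomial (Fin k ⊕ Fin m) F) (MvRatS F k m) (X (Sum.inr j))
        = xvS (Sum.inr j) from rfl, h1]
      rw [SaH, aeval_X, Sum.elim_inr]
      rfl
  exact congrFun (congrArg (fun (f : _ →ₐ[F] _) => ⇑f) heq) r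

lemma tau_alg (τ : Fin m → (MvRatS F k m ≃ₐ[F] MvRatS F k m)) {q : F} (hq0 : q ≠ 0)
    (hτ : ∀ j, τ j (xvS (Sum.inr j)) = algebraMap F (MvRatS F k m) q * xvS (Sum.inr j))
    (hτfix : ∀ j i, i ≠ Sum.inr j → τ j (xvS i) = xvS i)
    (β : Fin m → ℤ) (r : MvPolynomial (Fin k ⊕ Fin m) F) :
    thetaPowS τ β (algebraMap (MvPolynomial (Fin k ⊕ Fin m) F) (MvRatS F k m) r)
      = algebraMap (MvPolynomial (Fin k ⊕ Fin m) F) (MvRatS F k m) (TbH q β r) := by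
  have heq : ((thetaPowS τ β).toAlgHom.comp
        (IsScalarTower.toAlgHom F (MvPolynomial (Fin k ⊕ Fin m) F) (MvRatS F k m)))
      = (IsScalarTower.toAlgHom F (MvPolynomial (Fin k ⊕ Fin m) F) (MvRatS F k m)).comp
        (TbH q β) := by
    apply algHom_ext
    rintro (j | j)
    · have h1 : thetaPowS τ β (xvS (Sum.inl j)) = xvS (Sum.inl j) :=
        thetaPow_fix τ β _ (fun i => hτfix i (Sum.inl j) (by simp))
      simp only [AlgHom.comp_apply, IsScalarTower.coe_toAlgHom', AlgEquiv.toAlgHom_eq_coe,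
        AlgHom.coe_coe, AlgEquiv.coe_toAlgHom]
      rw [show algebraMap (MvPolynomial (Fin k ⊕ Fin m) F) (MvRatS F k m) (X (Sum.inl j))
        = xvS (Sum.inl j) from rfl, h1]
      rw [TbH, aeval_X, Sum.elim_inl]
      rfl
    · have h1 : thetaPowS τ β (xvS (Sum.inr j))
          = algebraMap F (MvRatS F k m) (q ^ β j) * xvS (Sum.inr j) :=
        thetaPow_eval_scale τ β (xvS (Sum.inr j)) j hq0 (hτ j)
          (fun i hi => hτfix i (Sum.inr j) (by simp [Ne, Sum.inr.injEq]; exact fun h => hi h.symm))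
      simp only [AlgHom.comp_apply, IsScalarTower.coe_toAlgHom', AlgEquiv.toAlgHom_eq_coe,
        AlgHom.coe_coe, AlgEquiv.coe_toAlgHom]
      rw [show algebraMap (MvPolynomial (Fin k ⊕ Fin m) F) (MvRatS F k m) (X (Sum.inr j))
        = xvS (Sum.inr j) from rfl, h1]
      rw [TbH, aeval_X, Sum.elim_inr, map_mul,
        show algebraMap (MvPolynomial (Fin k ⊕ Fin m) F) (MvRatS F k m) (C (q ^ β j))
          = algebraMap F (MvRatS F k m) (q ^ β j) from
          (IsScalarTower.algebraMap_apply F _ _ _).symm]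
      rfl
  exact congrFun (congrArg (fun (f : _ →ₐ[F] _) => ⇑f) heq) r


end
end Stmt6Aux


set_option maxHeartbeats 1000000 in
/-- **Proposition: `G_p = G^σ_p ⊕ G^τ_p`.** Let `p ∈ F[x]` be nonconstant and
`G = G^σ ⊕ G^τ`. If `θ = σ₀·τ₀ ∈ G_p` with `σ₀ ∈ G^σ`, `τ₀ ∈ G^τ` and `θ(p) = c·p`
(`c ∈ F` nonzero), then `σ₀(p) = p` and `τ₀(p) = c·p`. Consequently
`G/G_p ≅ G^σ/G^σ_p ⊕ G^τ/G^τ_p` is a free abelian group. -/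
theorem stmt_6 {F : Type*} [Field F] [CharZero F] {k m : ℕ}
    (q : F) (hq0 : q ≠ 0) (hq : ∀ l : ℤ, l ≠ 0 → q ^ l ≠ 1)
    (σ : Fin k → (MvRatS F k m ≃ₐ[F] MvRatS F k m))
    (hσ : ∀ j, σ j (xvS (Sum.inl j)) = xvS (Sum.inl j) + 1)
    (hσfix : ∀ j i, i ≠ Sum.inl j → σ j (xvS i) = xvS i)
    (τ : Fin m → (MvRatS F k m ≃ₐ[F] MvRatS F k m))
    (hτ : ∀ j, τ j (xvS (Sum.inr j)) = algebraMap F (MvRatS F k m) q * xvS (Sum.inr j))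
    (hτfix : ∀ j i, i ≠ Sum.inr j → τ j (xvS i) = xvS i)
    (haddσ : ∀ α β : Fin k → ℤ, thetaPowS σ (α + β) = thetaPowS σ α * thetaPowS σ β)
    (h0σ : thetaPowS σ (0 : Fin k → ℤ) = 1)
    (haddτ : ∀ α β : Fin m → ℤ, thetaPowS τ (α + β) = thetaPowS τ α * thetaPowS τ β)
    (h0τ : thetaPowS τ (0 : Fin m → ℤ) = 1)
    (haddF : ∀ α β : (Fin k ⊕ Fin m) → ℤ,
      thetaPowS σ ((α + β) ∘ Sum.inl) * thetaPowS τ ((α + β) ∘ Sum.inr) =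
        (thetaPowS σ (α ∘ Sum.inl) * thetaPowS τ (α ∘ Sum.inr)) *
          (thetaPowS σ (β ∘ Sum.inl) * thetaPowS τ (β ∘ Sum.inr)))
    (h0F : thetaPowS σ ((0 : (Fin k ⊕ Fin m) → ℤ) ∘ Sum.inl) *
      thetaPowS τ ((0 : (Fin k ⊕ Fin m) → ℤ) ∘ Sum.inr) = 1)
    (p : MvPolynomial (Fin k ⊕ Fin m) F) (hp : 0 < p.totalDegree) :
    (∀ (α : Fin k → ℤ) (β : Fin m → ℤ) (c : F), c ≠ 0 →
      (thetaPowS σ α * thetaPowS τ β)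
          (algebraMap (MvPolynomial (Fin k ⊕ Fin m) F) (MvRatS F k m) p) =
        algebraMap F (MvRatS F k m) c *
          algebraMap (MvPolynomial (Fin k ⊕ Fin m) F) (MvRatS F k m) p →
      thetaPowS σ α (algebraMap (MvPolynomial (Fin k ⊕ Fin m) F) (MvRatS F k m) p) =
          algebraMap (MvPolynomial (Fin k ⊕ Fin m) F) (MvRatS F k m) p ∧
        thetaPowS τ β (algebraMap (MvPolynomial (Fin k ⊕ Fin m) F) (MvRatS F k m) p) =
          algebraMap F (MvRatS F k m) c *
            algebraMap (MvPolynomial (Fin k ⊕ Fin m) F) (MvRatS F k m) p) ∧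
    Nonempty ((((Fin k ⊕ Fin m) → ℤ) ⧸
        isotropyZ (fun γ : (Fin k ⊕ Fin m) → ℤ =>
          thetaPowS σ (γ ∘ Sum.inl) * thetaPowS τ (γ ∘ Sum.inr)) haddF h0F
          (algebraMap (MvPolynomial (Fin k ⊕ Fin m) F) (MvRatS F k m) p)) ≃+
      (((Fin k → ℤ) ⧸ isotropyZ (thetaPowS σ) haddσ h0σ
          (algebraMap (MvPolynomial (Fin k ⊕ Fin m) F) (MvRatS F k m) p)) ×
        ((Fin m → ℤ) ⧸ isotropyZ (thetaPowS τ) haddτ h0τ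
          (algebraMap (MvPolynomial (Fin k ⊕ Fin m) F) (MvRatS F k m) p)))) ∧
    Module.Free ℤ (((Fin k ⊕ Fin m) → ℤ) ⧸
      isotropyZ (fun γ : (Fin k ⊕ Fin m) → ℤ =>
        thetaPowS σ (γ ∘ Sum.inl) * thetaPowS τ (γ ∘ Sum.inr)) haddF h0F
        (algebraMap (MvPolynomial (Fin k ⊕ Fin m) F) (MvRatS F k m) p))    := by
  classical
  have hC : ∀ a : F, algebraMap (MvPolynomial (Fin k ⊕ Fin m) F) (MvRatS F k m)
      (MvPolynomial.C a) = algebraMap F (MvRatS F k m) a := fun a => by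
    rw [← MvPolynomial.algebraMap_eq, ← IsScalarTower.algebraMap_apply]
  set pL := algebraMap (MvPolynomial (Fin k ⊕ Fin m) F) (MvRatS F k m) p with hpL
  -- Part 1: the splitting of the isotropy condition
  have part1 : ∀ (α : Fin k → ℤ) (β : Fin m → ℤ) (c : F), c ≠ 0 →
      (thetaPowS σ α * thetaPowS τ β) pL = algebraMap F (MvRatS F k m) c * pL →
      thetaPowS σ α pL = pL ∧
        thetaPowS τ β pL = algebraMap F (MvRatS F k m) c * pL := by
    intro α β c hc heq
    have hpoly : Stmt6Aux.SaH α (Stmt6Aux.TbH q β p) = MvPolynomial.C c * p := by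
      apply IsFractionRing.injective (MvPolynomial (Fin k ⊕ Fin m) F) (MvRatS F k m)
      rw [← Stmt6Aux.sigma_alg σ hσ hσfix, ← Stmt6Aux.tau_alg τ hq0 hτ hτfix,
        ← AlgEquiv.mul_apply, map_mul, hC]
      exact heq
    obtain ⟨h1, h2⟩ := Stmt6Aux.core hq0 α β hpoly
    constructor
    · rw [hpL, Stmt6Aux.sigma_alg σ hσ hσfix, h1]
    · rw [hpL, Stmt6Aux.tau_alg τ hq0 hτ hτfix, h2, map_mul, hC]
  -- membership characterizations
  have memsplit : ∀ γ : (Fin k ⊕ Fin m) → ℤ,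
      γ ∈ isotropyZ (fun γ : (Fin k ⊕ Fin m) → ℤ =>
          thetaPowS σ (γ ∘ Sum.inl) * thetaPowS τ (γ ∘ Sum.inr)) haddF h0F pL ↔
        ((γ ∘ Sum.inl) ∈ isotropyZ (thetaPowS σ) haddσ h0σ pL ∧
          (γ ∘ Sum.inr) ∈ isotropyZ (thetaPowS τ) haddτ h0τ pL) := by
    intro γ
    constructor
    · rintro ⟨c, hc, hceq⟩
      obtain ⟨hσp, hτp⟩ := part1 _ _ c hc hceq
      exact ⟨⟨1, one_ne_zero, by rw [hσp, map_one, one_mul]⟩, ⟨c, hc, hτp⟩⟩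
    · rintro ⟨⟨c1, hc1, h1⟩, ⟨c2, hc2, h2⟩⟩
      refine ⟨c1 * c2, mul_ne_zero hc1 hc2, ?_⟩
      rw [AlgEquiv.mul_apply, h2, map_mul, AlgEquiv.commutes, h1, map_mul]
      ring
  -- the comparison homomorphism
  let cl : ((Fin k ⊕ Fin m) → ℤ) →+ (Fin k → ℤ) :=
    AddMonoidHom.mk' (fun γ => γ ∘ Sum.inl) (fun a b => rfl)
  let cr : ((Fin k ⊕ Fin m) → ℤ) →+ (Fin m → ℤ) :=
    AddMonoidHom.mk' (fun γ => γ ∘ Sum.inr) (fun a b => rfl)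
  let f : ((Fin k ⊕ Fin m) → ℤ) →+
      (((Fin k → ℤ) ⧸ isotropyZ (thetaPowS σ) haddσ h0σ pL) ×
        ((Fin m → ℤ) ⧸ isotropyZ (thetaPowS τ) haddτ h0τ pL)) :=
    ((QuotientAddGroup.mk' (isotropyZ (thetaPowS σ) haddσ h0σ pL)).comp cl).prod
      ((QuotientAddGroup.mk' (isotropyZ (thetaPowS τ) haddτ h0τ pL)).comp cr)
  have hker : isotropyZ (fun γ : (Fin k ⊕ Fin m) → ℤ =>
      thetaPowS σ (γ ∘ Sum.inl) * thetaPowS τ (γ ∘ Sum.inr)) haddF h0F pL = f.ker := by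
    ext γ
    rw [AddMonoidHom.mem_ker, memsplit γ]
    have : f γ = (QuotientAddGroup.mk' (isotropyZ (thetaPowS σ) haddσ h0σ pL) (γ ∘ Sum.inl),
        QuotientAddGroup.mk' (isotropyZ (thetaPowS τ) haddτ h0τ pL) (γ ∘ Sum.inr)) := rfl
    rw [this, Prod.mk_eq_zero, QuotientAddGroup.mk'_apply, QuotientAddGroup.mk'_apply,
      QuotientAddGroup.eq_zero_iff, QuotientAddGroup.eq_zero_iff]
  have hsurj : Function.Surjective f := by
    rintro ⟨x, y⟩
    obtain ⟨a, rfl⟩ := QuotientAddGroup.mk'_surjective _ x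
    obtain ⟨b, rfl⟩ := QuotientAddGroup.mk'_surjective _ y
    exact ⟨Sum.elim a b, rfl⟩
  -- torsion-freeness of the combined quotient
  have tors : ∀ (n : ℤ) (γ : (Fin k ⊕ Fin m) → ℤ), n ≠ 0 →
      n • γ ∈ isotropyZ (fun γ : (Fin k ⊕ Fin m) → ℤ =>
        thetaPowS σ (γ ∘ Sum.inl) * thetaPowS τ (γ ∘ Sum.inr)) haddF h0F pL →
      γ ∈ isotropyZ (fun γ : (Fin k ⊕ Fin m) → ℤ =>
        thetaPowS σ (γ ∘ Sum.inl) * thetaPowS τ (γ ∘ Sum.inr)) haddF h0F pL := by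
    intro n γ hn hmem
    obtain ⟨c, hc, hceq⟩ := hmem
    have hpoly : Stmt6Aux.SaH (n • (γ ∘ Sum.inl)) (Stmt6Aux.TbH q (n • (γ ∘ Sum.inr)) p)
        = MvPolynomial.C c * p := by
      apply IsFractionRing.injective (MvPolynomial (Fin k ⊕ Fin m) F) (MvRatS F k m)
      rw [← Stmt6Aux.sigma_alg σ hσ hσfix, ← Stmt6Aux.tau_alg τ hq0 hτ hτfix,
        ← AlgEquiv.mul_apply, map_mul, hC]
      exact hceq
    obtain ⟨c', hc', hpoly'⟩ := Stmt6Aux.torsion hq0 hq hn (γ ∘ Sum.inl) (γ ∘ Sum.inr) hpoly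
    refine ⟨c', hc', ?_⟩
    rw [AlgEquiv.mul_apply, hpL, Stmt6Aux.tau_alg τ hq0 hτ hτfix,
      Stmt6Aux.sigma_alg σ hσ hσfix, hpoly', map_mul, hC]
  refine ⟨part1, ⟨(QuotientAddGroup.quotientAddEquivOfEq hker).trans
    (QuotientAddGroup.quotientKerEquivOfSurjective f hsurj)⟩, ?_⟩
  -- freeness
  haveI i2 : Module.Finite ℤ (((Fin k ⊕ Fin m) → ℤ) ⧸
      isotropyZ (fun γ : (Fin k ⊕ Fin m) → ℤ =>
        thetaPowS σ (γ ∘ Sum.inl) * thetaPowS τ (γ ∘ Sum.inr)) haddF h0F pL) :=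
    Module.Finite.of_surjective
      ((QuotientAddGroup.mk' _).toIntLinearMap) (QuotientAddGroup.mk'_surjective _)
  haveI i3 : NoZeroSMulDivisors ℤ (((Fin k ⊕ Fin m) → ℤ) ⧸
      isotropyZ (fun γ : (Fin k ⊕ Fin m) → ℤ =>
        thetaPowS σ (γ ∘ Sum.inl) * thetaPowS τ (γ ∘ Sum.inr)) haddF h0F pL) := by
    constructor
    intro n x h
    by_cases hn : n = 0
    · exact Or.inl hn
    · right
      obtain ⟨γ, rfl⟩ := QuotientAddGroup.mk'_surjective _ x
      rw [← map_zsmul (QuotientAddGroup.mk' _) n γ, QuotientAddGroup.mk'_apply,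
        QuotientAddGroup.eq_zero_iff] at h
      rw [QuotientAddGroup.mk'_apply, QuotientAddGroup.eq_zero_iff]
      exact tors n γ hn h
  infer_instance
end

section
/- Let F be a field of characteristic zero, let θ be either the shift operator σ (x ↦ x+1) or the q-shift operator τ_q (x ↦ q·x) on F(x) in one variable x, let c ∈ F be nonzero, let j ≥ 1, let d ∈ F[x] be irreducible and normal with respect to θ, and let a ∈ F[x] with deg(a) < deg(d). Then a/d^j is (c·θ)-summable in F(x), i.e., a/d^j = c·θ(g) − g for some g ∈ F(x), if and only if a = 0. -/
open Polynomial IsDedekindDomain IsDedekindDomain.HeightOneSpectrum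
open scoped Multiplicative WithZero

section Aux

variable {F : Type*} [Field F]

/-- The height-one prime of `F[x]` generated by an irreducible polynomial. -/
noncomputable def hosOf {p : Polynomial F} (hp : Irreducible p) :
    HeightOneSpectrum (Polynomial F) where
  asIdeal := Ideal.span {p}
  isPrime := (Ideal.span_singleton_prime hp.ne_zero).mpr hp.prime
  ne_bot := by
    simp only [Ne, Ideal.span_singleton_eq_bot]
    exact hp.ne_zero

lemma zm0_eq {x y : ℤᵐ⁰} (hx : x ≠ 0) (hy : y ≠ 0) (hx1 : x ≤ 1) (hy1 : y ≤ 1)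
    (h : ∀ n : ℕ, x ≤ WithZero.exp (-(n : ℤ)) ↔
      y ≤ WithZero.exp (-(n : ℤ))) : x = y := by
  have ex : ∀ m : Multiplicative ℤ, ((m : ℤᵐ⁰) ≤ 1) →
      ∃ n : ℕ, m = Multiplicative.ofAdd (-(n : ℤ)) := by
    intro m hm
    rw [← WithZero.coe_one, WithZero.coe_le_coe] at hm
    have h0 : Multiplicative.toAdd m ≤ 0 := by
      have := Multiplicative.toAdd_le.mpr hm
      simpa using this
    refine ⟨(-(Multiplicative.toAdd m)).toNat, ?_⟩
    rw [Int.toNat_of_nonneg (by omega), neg_neg, ofAdd_toAdd]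
  obtain ⟨mx, rfl⟩ : ∃ m : Multiplicative ℤ, (m : ℤᵐ⁰) = x :=
    ⟨WithZero.unzero hx, WithZero.coe_unzero hx⟩
  obtain ⟨my, rfl⟩ : ∃ m : Multiplicative ℤ, (m : ℤᵐ⁰) = y :=
    ⟨WithZero.unzero hy, WithZero.coe_unzero hy⟩
  obtain ⟨nx, rfl⟩ := ex mx hx1
  obtain ⟨ny, rfl⟩ := ex my hy1
  exact le_antisymm ((h ny).mpr le_rfl) ((h nx).mp le_rfl)

lemma intVal_map (ψ : Polynomial F ≃ₐ[F] Polynomial F) {p : Polynomial F}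
    (hp : Irreducible p) (hp' : Irreducible (ψ p)) (r : Polynomial F) :
    (hosOf hp').intValuationDef (ψ r) = (hosOf hp).intValuationDef r := by
  rcases eq_or_ne r 0 with rfl | hr
  · rw [map_zero]
    simp [IsDedekindDomain.HeightOneSpectrum.intValuationDef]
  have hψr : ψ r ≠ 0 := fun h => hr (ψ.injective (h.trans (map_zero ψ).symm))
  rw [← intValuation_apply, ← intValuation_apply]
  refine zm0_eq ((hosOf hp').intValuation_ne_zero _ hψr)
    ((hosOf hp).intValuation_ne_zero _ hr)
    ((hosOf hp').intValuation_le_one _) ((hosOf hp).intValuation_le_one _) ?_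
  intro n
  rw [(hosOf hp').intValuation_le_pow_iff_dvd, (hosOf hp).intValuation_le_pow_iff_dvd]
  show Ideal.span {ψ p} ^ n ∣ Ideal.span {ψ r} ↔ Ideal.span {p} ^ n ∣ Ideal.span {r}
  rw [Ideal.span_singleton_pow, Ideal.span_singleton_pow,
    span_singleton_dvd_span_singleton_iff_dvd, span_singleton_dvd_span_singleton_iff_dvd]
  constructor
  · intro h'
    have h2 := map_dvd ψ.symm h'
    simpa [map_pow] using h2
  · intro h'
    simpa [map_pow] using map_dvd ψ h'

lemma val_map (θ : RatFunc F ≃ₐ[F] RatFunc F) (φ : Polynomial F ≃ₐ[F] Polynomial F)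
    (hcomm : ∀ p : Polynomial F, θ (algebraMap (Polynomial F) (RatFunc F) p)
      = algebraMap (Polynomial F) (RatFunc F) (φ p))
    {p p' : Polynomial F} (hp : Irreducible p) (hp' : Irreducible p') (hpp' : p' = φ p)
    (h : RatFunc F) :
    (hosOf hp').valuation (RatFunc F) (θ h) = (hosOf hp).valuation (RatFunc F) h := by
  subst hpp'
  conv_lhs => rw [← RatFunc.num_div_denom h]
  conv_rhs => rw [← RatFunc.num_div_denom h]
  rw [map_div₀, Valuation.map_div, Valuation.map_div, hcomm, hcomm,
    valuation_of_algebraMap, valuation_of_algebraMap,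
    valuation_of_algebraMap, valuation_of_algebraMap,
    intValuation_apply, intValuation_apply, intValuation_apply, intValuation_apply,
    intVal_map φ hp hp', intVal_map φ hp hp']

lemma comm_zpow (θ : RatFunc F ≃ₐ[F] RatFunc F) (φ : Polynomial F ≃ₐ[F] Polynomial F)
    (hcomm : ∀ p : Polynomial F, θ (algebraMap (Polynomial F) (RatFunc F) p)
      = algebraMap (Polynomial F) (RatFunc F) (φ p)) (ℓ : ℤ) :
    ∀ p : Polynomial F, (θ ^ ℓ) (algebraMap (Polynomial F) (RatFunc F) p)
      = algebraMap (Polynomial F) (RatFunc F) ((φ ^ ℓ) p) := by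
  have hinv : ∀ p : Polynomial F, θ⁻¹ (algebraMap (Polynomial F) (RatFunc F) p)
      = algebraMap (Polynomial F) (RatFunc F) (φ⁻¹ p) := by
    intro p
    show θ.symm _ = algebraMap (Polynomial F) (RatFunc F) (φ.symm p)
    refine θ.injective ?_
    rw [AlgEquiv.apply_symm_apply, hcomm, AlgEquiv.apply_symm_apply]
  induction ℓ using Int.induction_on with
  | zero => intro p; simp
  | succ n ih =>
      intro p
      rw [zpow_add_one, zpow_add_one, AlgEquiv.mul_apply, AlgEquiv.mul_apply, hcomm, ih]
  | pred n ih =>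
      intro p
      rw [zpow_sub_one, zpow_sub_one, AlgEquiv.mul_apply, AlgEquiv.mul_apply, hinv, ih]

lemma deg_zpow (φ : Polynomial F ≃ₐ[F] Polynomial F)
    (hφ : ∀ p : Polynomial F, (φ p).natDegree = p.natDegree) (ℓ : ℤ) :
    ∀ p : Polynomial F, ((φ ^ ℓ) p).natDegree = p.natDegree := by
  have hsymm : ∀ p : Polynomial F, (φ.symm p).natDegree = p.natDegree := by
    intro p
    conv_rhs => rw [← AlgEquiv.apply_symm_apply φ p, hφ]
  induction ℓ using Int.induction_on with
  | zero => intro p; rw [zpow_zero, AlgEquiv.one_apply]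
  | succ n ih =>
      intro p
      rw [zpow_add_one, AlgEquiv.mul_apply, ih, hφ]
  | pred n ih =>
      intro p
      rw [zpow_sub_one, AlgEquiv.mul_apply, ih]
      exact hsymm p

end Aux

/-- **univariate summability criterion.** Let `F` be a field of characteristic
zero, `θ` either the shift `x ↦ x+1` or the `q`-shift `x ↦ q·x` on `F(x)`, `c ∈ F` nonzero,
`j ≥ 1`, `d ∈ F[x]` irreducible and normal w.r.t. `θ` (every common polynomial divisor of `d`
and `θ^ℓ(d)`, `ℓ ≠ 0`, is a unit), and `a ∈ F[x]` with `deg a < deg d`. Then `a/d^j` is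
`(c·θ)`-summable in `F(x)` iff `a = 0`. -/
theorem stmt_8 {F : Type*} [Field F] [CharZero F]
    (q : F) (hq0 : q ≠ 0) (hq : ∀ m : ℤ, m ≠ 0 → q ^ m ≠ 1)
    (θ : RatFunc F ≃ₐ[F] RatFunc F)
    (hθ : θ RatFunc.X = RatFunc.X + 1 ∨ θ RatFunc.X = algebraMap F (RatFunc F) q * RatFunc.X)
    (c : F) (hc : c ≠ 0) (j : ℕ) (hj : 1 ≤ j)
    (d : Polynomial F) (hd : Irreducible d)
    (hnormal : ∀ ℓ : ℤ, ℓ ≠ 0 → ∀ w : Polynomial F, w ∣ d →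
      (∃ u : Polynomial F,
        (θ ^ ℓ) (algebraMap (Polynomial F) (RatFunc F) d) =
          algebraMap (Polynomial F) (RatFunc F) w * algebraMap (Polynomial F) (RatFunc F) u) →
      IsUnit w)
    (a : Polynomial F) (ha : a.degree < d.degree) :
    (∃ g : RatFunc F,
        algebraMap (Polynomial F) (RatFunc F) a / algebraMap (Polynomial F) (RatFunc F) d ^ j =
          algebraMap F (RatFunc F) c * θ g - g) ↔ a = 0 := by
  classical
  -- Construct the polynomial-level automorphism φ with θ ∘ algebraMap = algebraMap ∘ φ.
  obtain ⟨s, t, h1, h2, hsdeg, hθX⟩ :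
      ∃ s t : Polynomial F, Polynomial.aeval s t = Polynomial.X ∧
        Polynomial.aeval t s = Polynomial.X ∧ s.natDegree = 1 ∧
        θ RatFunc.X = algebraMap (Polynomial F) (RatFunc F) s := by
    rcases hθ with h | h
    · refine ⟨Polynomial.X + Polynomial.C 1, Polynomial.X - Polynomial.C 1, by simp, by simp,
        ?_, ?_⟩
      · simpa using Polynomial.natDegree_X_add_C (1 : F)
      · rw [h, map_add, RatFunc.algebraMap_X, Polynomial.C_1, map_one]
    · refine ⟨Polynomial.C q * Polynomial.X, Polynomial.C q⁻¹ * Polynomial.X, ?_, ?_,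
        Polynomial.natDegree_C_mul_X q hq0, ?_⟩
      · rw [map_mul, Polynomial.aeval_C, Polynomial.aeval_X, Polynomial.algebraMap_eq,
          ← mul_assoc, ← Polynomial.C_mul, inv_mul_cancel₀ hq0, Polynomial.C_1, one_mul]
      · rw [map_mul, Polynomial.aeval_C, Polynomial.aeval_X, Polynomial.algebraMap_eq,
          ← mul_assoc, ← Polynomial.C_mul, mul_inv_cancel₀ hq0, Polynomial.C_1, one_mul]
      · rw [h, map_mul, RatFunc.algebraMap_C, RatFunc.algebraMap_X, RatFunc.algebraMap_eq_C]
  set φ : Polynomial F ≃ₐ[F] Polynomial F :=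
    AlgEquiv.ofAlgHom (Polynomial.aeval s) (Polynomial.aeval t)
      (Polynomial.algHom_ext (by simp [h1]))
      (Polynomial.algHom_ext (by simp [h2])) with hφdef
  have hφapp : ∀ p : Polynomial F, φ p = Polynomial.aeval s p := fun _ => rfl
  have halg : ∀ p : Polynomial F,
      algebraMap (Polynomial F) (RatFunc F) p = Polynomial.aeval RatFunc.X p := by
    intro p
    have h1' := Polynomial.aeval_algHom_apply
      (IsScalarTower.toAlgHom F (Polynomial F) (RatFunc F)) Polynomial.X p
    rw [Polynomial.aeval_X_left_apply] at h1'
    simp only [IsScalarTower.coe_toAlgHom'] at h1'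
    rw [RatFunc.algebraMap_X] at h1'
    exact h1'.symm
  have hcomm : ∀ p : Polynomial F, θ (algebraMap (Polynomial F) (RatFunc F) p)
      = algebraMap (Polynomial F) (RatFunc F) (φ p) := by
    intro p
    calc θ (algebraMap (Polynomial F) (RatFunc F) p)
        = θ (Polynomial.aeval RatFunc.X p) := by rw [halg]
      _ = Polynomial.aeval (θ RatFunc.X) p :=
          (Polynomial.aeval_algHom_apply θ RatFunc.X p).symm
      _ = Polynomial.aeval (algebraMap (Polynomial F) (RatFunc F) s) p := by rw [hθX]
      _ = Polynomial.aeval (Polynomial.aeval RatFunc.X s) p := by rw [halg s]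
      _ = Polynomial.aeval RatFunc.X (Polynomial.aeval s p) :=
          Polynomial.aeval_algHom_apply (Polynomial.aeval RatFunc.X) s p
      _ = algebraMap (Polynomial F) (RatFunc F) (Polynomial.aeval s p) := (halg _).symm
      _ = algebraMap (Polynomial F) (RatFunc F) (φ p) := by rw [hφapp]
  have hφdeg : ∀ p : Polynomial F, (φ p).natDegree = p.natDegree := by
    intro p
    rw [hφapp, ← Polynomial.comp_eq_aeval, Polynomial.natDegree_comp, hsdeg, mul_one]
  have hZ := comm_zpow θ φ hcomm
  have happly : ∀ (x y : ℤ) (r : Polynomial F), (φ ^ (x + y)) r = (φ ^ x) ((φ ^ y) r) := by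
    intro x y r
    rw [zpow_add, AlgEquiv.mul_apply]
  have hirr : ∀ ℓ : ℤ, Irreducible ((φ ^ ℓ) d) := fun ℓ => Irreducible.map (φ ^ ℓ) hd
  have hdegpl : ∀ ℓ : ℤ, ((φ ^ ℓ) d).natDegree = d.natDegree :=
    fun ℓ => deg_zpow φ hφdeg ℓ d
  have hpl0 : (φ ^ (0 : ℤ)) d = d := by rw [zpow_zero, AlgEquiv.one_apply]
  have hpl1 : ∀ ℓ : ℤ, (φ ^ (ℓ + 1)) d = φ ((φ ^ ℓ) d) := by
    intro ℓ
    rw [show ℓ + 1 = 1 + ℓ from by ring, happly, zpow_one]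
  constructor
  · rintro ⟨g, hg⟩
    by_contra hA
    -- d and its shifts are pairwise non-associated
    have hassoc : ∀ ℓ : ℤ, ℓ ≠ 0 → ¬ Associated d ((φ ^ ℓ) d) := by
      intro ℓ hℓ hAss
      obtain ⟨u, hu⟩ := hAss
      refine hd.not_isUnit (hnormal ℓ hℓ d dvd_rfl ⟨(u : Polynomial F), ?_⟩)
      rw [hZ ℓ d, ← hu, map_mul]
    have hnass : ∀ ℓ ℓ' : ℤ, Associated ((φ ^ ℓ) d) ((φ ^ ℓ') d) → ℓ = ℓ' := by
      intro ℓ ℓ' hAss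
      by_contra hne
      apply hassoc (ℓ' - ℓ) (by omega)
      have e1 : (φ ^ (-ℓ)) ((φ ^ ℓ) d) = d := by
        rw [← happly, neg_add_cancel, zpow_zero, AlgEquiv.one_apply]
      have e2 : (φ ^ (-ℓ)) ((φ ^ ℓ') d) = (φ ^ (ℓ' - ℓ)) d := by
        rw [← happly, show -ℓ + ℓ' = ℓ' - ℓ from by ring]
      have hd1 := map_dvd (φ ^ (-ℓ)) hAss.dvd
      have hd2 := map_dvd (φ ^ (-ℓ)) hAss.symm.dvd
      rw [e1, e2] at hd1
      rw [e2, e1] at hd2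
      exact associated_of_dvd_dvd hd1 hd2
    have hdvd_d : ∀ ℓ : ℤ, ℓ ≠ 0 → ¬ (φ ^ ℓ) d ∣ d := by
      intro ℓ hℓ hdvd
      exact hassoc ℓ hℓ (((hirr ℓ).associated_of_dvd hd hdvd).symm)
    have hdvd_a : ∀ ℓ : ℤ, ¬ (φ ^ ℓ) d ∣ a := by
      intro ℓ hdvd
      have h4 := Polynomial.natDegree_le_of_dvd hdvd hA
      have h5 := Polynomial.natDegree_lt_natDegree hA ha
      rw [hdegpl] at h4
      omega
    have hdvd_dj : ∀ ℓ : ℤ, ℓ ≠ 0 → ¬ (φ ^ ℓ) d ∣ d ^ j := fun ℓ hℓ hdvd =>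
      hdvd_d ℓ hℓ ((hirr ℓ).prime.dvd_of_dvd_pow hdvd)
    -- basic valuation facts
    have hvone : ∀ (ℓ : ℤ) (r : Polynomial F), r ≠ 0 → ¬ (φ ^ ℓ) d ∣ r →
        (hosOf (hirr ℓ)).valuation (RatFunc F) (algebraMap (Polynomial F) (RatFunc F) r) = 1 := by
      intro ℓ r hr hnd
      refine le_antisymm ((hosOf (hirr ℓ)).valuation_le_one r) (not_lt.mp fun hlt => hnd ?_)
      have h6 := ((hosOf (hirr ℓ)).valuation_lt_one_iff_dvd r).mp hlt
      exact Ideal.mem_span_singleton.mp (Ideal.dvd_span_singleton.mp h6)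
    have hvnz : ∀ (ℓ : ℤ) (x : RatFunc F), x ≠ 0 → (hosOf (hirr ℓ)).valuation (RatFunc F) x ≠ 0 :=
      fun ℓ x hx => (Valuation.ne_zero_iff _).mpr hx
    have hcC : algebraMap F (RatFunc F) c
        = algebraMap (Polynomial F) (RatFunc F) (Polynomial.C c) := by
      rw [IsScalarTower.algebraMap_apply F (Polynomial F) (RatFunc F), Polynomial.algebraMap_eq]
    have hvc : ∀ ℓ : ℤ, (hosOf (hirr ℓ)).valuation (RatFunc F) (algebraMap F (RatFunc F) c) = 1 := by
      intro ℓ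
      rw [hcC]
      refine hvone ℓ _ (Polynomial.C_ne_zero.mpr hc) (fun hdvd => (hirr ℓ).not_isUnit ?_)
      exact isUnit_of_dvd_unit hdvd (Polynomial.isUnit_C.mpr hc.isUnit)
    have hequiv : ∀ (ℓ : ℤ) (x : RatFunc F),
        (hosOf (hirr (ℓ + 1))).valuation (RatFunc F) (θ x) = (hosOf (hirr ℓ)).valuation (RatFunc F) x :=
      fun ℓ x => val_map θ φ hcomm (hirr ℓ) (hirr (ℓ + 1)) (hpl1 ℓ) x
    -- g ≠ 0
    rcases eq_or_ne g 0 with rfl | hgne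
    · rw [map_zero, mul_zero, sub_zero] at hg
      rcases div_eq_zero_iff.mp hg with h' | h'
      · exact RatFunc.algebraMap_ne_zero hA h'
      · exact pow_ne_zero _ (RatFunc.algebraMap_ne_zero hd.ne_zero) h'
    -- valuations of f = a/d^j
    have hfa : algebraMap (Polynomial F) (RatFunc F) a
          / algebraMap (Polynomial F) (RatFunc F) d ^ j
        = algebraMap (Polynomial F) (RatFunc F) a
          / algebraMap (Polynomial F) (RatFunc F) (d ^ j) := by
      rw [map_pow]
    have hvf0 : 1 < (hosOf (hirr 0)).valuation (RatFunc F) (algebraMap (Polynomial F) (RatFunc F) a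
        / algebraMap (Polynomial F) (RatFunc F) d ^ j) := by
      rw [hfa, Valuation.map_div, hvone 0 a hA (hdvd_a 0)]
      have hvd : (hosOf (hirr 0)).valuation (RatFunc F)
          (algebraMap (Polynomial F) (RatFunc F) (d ^ j)) < 1 := by
        refine ((hosOf (hirr 0)).valuation_lt_one_iff_dvd (d ^ j)).mpr ?_
        refine Ideal.dvd_span_singleton.mpr (Ideal.mem_span_singleton.mpr ?_)
        rw [hpl0]
        exact dvd_pow_self d (by omega)
      rw [one_div]
      exact one_lt_inv_iff₀.mpr
        ⟨zero_lt_iff.mpr (hvnz 0 _ (RatFunc.algebraMap_ne_zero (pow_ne_zero _ hd.ne_zero))), hvd⟩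
    have hvfl : ∀ ℓ : ℤ, ℓ ≠ 0 →
        (hosOf (hirr ℓ)).valuation (RatFunc F) (algebraMap (Polynomial F) (RatFunc F) a
          / algebraMap (Polynomial F) (RatFunc F) d ^ j) ≤ 1 := by
      intro ℓ hℓ
      rw [hfa, Valuation.map_div, hvone ℓ a hA (hdvd_a ℓ),
        hvone ℓ (d ^ j) (pow_ne_zero _ hd.ne_zero) (hdvd_dj ℓ hℓ), div_one]
    -- poles of g correspond to factors of its denominator
    have hpole : ∀ ℓ : ℤ, 1 < (hosOf (hirr ℓ)).valuation (RatFunc F) g → (φ ^ ℓ) d ∣ g.denom := by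
      intro ℓ h1'
      by_contra hnd
      have hle : (hosOf (hirr ℓ)).valuation (RatFunc F) g ≤ 1 := by
        conv_lhs => rw [← RatFunc.num_div_denom g]
        rw [Valuation.map_div, hvone ℓ g.denom (RatFunc.denom_ne_zero g) hnd, div_one,
          valuation_of_algebraMap]
        exact (hosOf (hirr ℓ)).intValuation_le_one _
      exact absurd h1' (not_lt.mpr hle)
    have hSfin : {ℓ : ℤ | 1 < (hosOf (hirr ℓ)).valuation (RatFunc F) g}.Finite := by
      apply Set.Finite.of_finite_image (f := fun ℓ : ℤ => normalize ((φ ^ ℓ) d))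
      · apply Set.Finite.subset
          (UniqueFactorizationMonoid.normalizedFactors g.denom).toFinset.finite_toSet
        rintro x ⟨ℓ, hℓ, rfl⟩
        simp only [Finset.mem_coe, Multiset.mem_toFinset]
        obtain ⟨qq, hq1, hq2⟩ := UniqueFactorizationMonoid.exists_mem_normalizedFactors_of_dvd
          (RatFunc.denom_ne_zero g) (hirr ℓ) (hpole ℓ hℓ)
        have : normalize ((φ ^ ℓ) d) = qq := by
          rw [← UniqueFactorizationMonoid.normalize_normalized_factor qq hq1]
          exact normalize_eq_normalize hq2.dvd hq2.symm.dvd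
        rwa [this]
      · intro ℓ _ ℓ' _ heq
        have heq' : normalize ((φ ^ ℓ) d) = normalize ((φ ^ ℓ') d) := heq
        refine hnass ℓ ℓ' ?_
        have hA1 : Associated ((φ ^ ℓ) d) (normalize ((φ ^ ℓ) d)) :=
          (normalize_associated _).symm
        rw [heq'] at hA1
        exact hA1.trans (normalize_associated _)
    by_cases hS : {ℓ : ℤ | 1 < (hosOf (hirr ℓ)).valuation (RatFunc F) g}.Nonempty
    · -- nonempty pole set: analyze extreme poles
      have hne : hSfin.toFinset.Nonempty := hSfin.toFinset_nonempty.mpr hS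
      set lM := hSfin.toFinset.max' hne with hlMdef
      set lm := hSfin.toFinset.min' hne with hlmdef
      have hmemM : 1 < (hosOf (hirr lM)).valuation (RatFunc F) g := by
        have h7 := hSfin.toFinset.max'_mem hne
        rw [Set.Finite.mem_toFinset] at h7
        exact h7
      have hmemm : 1 < (hosOf (hirr lm)).valuation (RatFunc F) g := by
        have h7 := hSfin.toFinset.min'_mem hne
        rw [Set.Finite.mem_toFinset] at h7
        exact h7
      have hM1 : (hosOf (hirr (lM + 1))).valuation (RatFunc F) g ≤ 1 := by
        by_contra h8
        have h9 : lM + 1 ∈ hSfin.toFinset := by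
          rw [Set.Finite.mem_toFinset]
          exact not_le.mp h8
        have := hSfin.toFinset.le_max' _ h9
        omega
      have hm1 : (hosOf (hirr (lm - 1))).valuation (RatFunc F) g ≤ 1 := by
        by_contra h8
        have h9 : lm - 1 ∈ hSfin.toFinset := by
          rw [Set.Finite.mem_toFinset]
          exact not_le.mp h8
        have := hSfin.toFinset.min'_le _ h9
        omega
      have hfM : 1 < (hosOf (hirr (lM + 1))).valuation (RatFunc F)
          (algebraMap (Polynomial F) (RatFunc F) a
            / algebraMap (Polynomial F) (RatFunc F) d ^ j) := by
        have hcg : 1 < (hosOf (hirr (lM + 1))).valuation (RatFunc F)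
            (algebraMap F (RatFunc F) c * θ g) := by
          rw [map_mul, hvc, one_mul, hequiv lM g]
          exact hmemM
        by_contra h8
        push_neg at h8
        have h10 : algebraMap F (RatFunc F) c * θ g
            = (algebraMap (Polynomial F) (RatFunc F) a
              / algebraMap (Polynomial F) (RatFunc F) d ^ j) + g := by
          rw [hg]; ring
        rw [h10] at hcg
        exact absurd hcg (not_lt.mpr (le_trans (((hosOf (hirr (lM + 1))).valuation (RatFunc F)).map_add _ _)
          (max_le h8 hM1)))
      have hM0 : lM + 1 = 0 := by
        by_contra h8
        exact absurd hfM (not_lt.mpr (hvfl _ h8))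
      have hfm : 1 < (hosOf (hirr lm)).valuation (RatFunc F)
          (algebraMap (Polynomial F) (RatFunc F) a
            / algebraMap (Polynomial F) (RatFunc F) d ^ j) := by
        have hθg : (hosOf (hirr lm)).valuation (RatFunc F) (algebraMap F (RatFunc F) c * θ g) ≤ 1 := by
          rw [map_mul, hvc, one_mul]
          have h9 := hequiv (lm - 1) g
          rw [show lm - 1 + 1 = lm from by ring] at h9
          rw [h9]
          exact hm1
        by_contra h8
        push_neg at h8
        have h10 : g = algebraMap F (RatFunc F) c * θ g
            - (algebraMap (Polynomial F) (RatFunc F) a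
              / algebraMap (Polynomial F) (RatFunc F) d ^ j) := by
          rw [hg]; ring
        have h11 : (hosOf (hirr lm)).valuation (RatFunc F) g ≤ 1 := by
          rw [h10]
          exact le_trans (((hosOf (hirr lm)).valuation (RatFunc F)).map_sub _ _) (max_le hθg h8)
        exact absurd hmemm (not_lt.mpr h11)
      have hm0 : lm = 0 := by
        by_contra h8
        exact absurd hfm (not_lt.mpr (hvfl _ h8))
      have hle' : lm ≤ lM := hSfin.toFinset.min'_le _ (hSfin.toFinset.max'_mem hne)
      omega
    · -- empty pole set: g has no pole anywhere, contradiction at d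
      have hgle : ∀ ℓ : ℤ, (hosOf (hirr ℓ)).valuation (RatFunc F) g ≤ 1 := by
        intro ℓ
        by_contra h8
        exact hS ⟨ℓ, not_le.mp h8⟩
      have hθgle : (hosOf (hirr 0)).valuation (RatFunc F) (algebraMap F (RatFunc F) c * θ g) ≤ 1 := by
        rw [map_mul, hvc, one_mul]
        have h9 := hequiv (-1) g
        rw [show (-1 : ℤ) + 1 = 0 from by ring] at h9
        rw [h9]
        exact hgle (-1)
      have h11 : (hosOf (hirr 0)).valuation (RatFunc F) (algebraMap (Polynomial F) (RatFunc F) a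
          / algebraMap (Polynomial F) (RatFunc F) d ^ j) ≤ 1 := by
        rw [hg]
        exact le_trans (((hosOf (hirr 0)).valuation (RatFunc F)).map_sub _ _) (max_le hθgle (hgle 0))
      exact absurd hvf0 (not_lt.mpr h11)
  · rintro rfl
    exact ⟨0, by simp⟩
end
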